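/- arXiv:2309.07783 — 5 statements merged into one kernel-verified Lean document; each statement's English description precedes it below -/
import Mathlib

section
/- Let f : I → ℝ be α-Hölder continuous on a closed interval I ⊂ ℝ with 0 < α < 1. Then for every θ with 0 < θ < α, the regularized Assouad spectrum of Graph(f) satisfies dim_{A,reg}^θ(Graph(f)) ≤ (2 − α − θ)/(1 − θ). -/
open Set Metric Filter Topology MeasureTheory

/-- Least number of sets of diameter at most `r` needed to cover `F` (junk `0` if no finite cover). -/
noncomputable def coverN (F : Set (ℝ × ℝ)) (r : ℝ) : ℕ :=
  sInf {n : ℕ | ∃ U : Fin n → Set (ℝ × ℝ), F ⊆ ⋃ i, U i ∧ ∀ i, Metric.diam (U i) ≤ r}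

/-- Oscillation of `f` over `J`. -/
noncomputable def osc (f : ℝ → ℝ) (J : Set ℝ) : ℝ :=
  sSup {x | ∃ t ∈ J, ∃ s ∈ J, x = |f t - f s|}

/-- Graph of `f` over `I`. -/
def Graph' (f : ℝ → ℝ) (I : Set ℝ) : Set (ℝ × ℝ) := (fun t => (t, f t)) '' I

/-- Assouad spectrum with parameter `θ`, defined via scales `r = R^(1/θ)`. -/
noncomputable def assouadSpectrum (E : Set (ℝ × ℝ)) (θ : ℝ) : ℝ :=
  sInf {β : ℝ | 0 < β ∧ ∃ C > 0, ∀ z ∈ E, ∀ R : ℝ, 0 < R → R < 1 →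
    (coverN (Metric.closedBall z R ∩ E) (R ^ (1/θ)) : ℝ) ≤ C * (R / R ^ (1/θ)) ^ β}

/-- Regularized (upper) Assouad spectrum: `sup_{0<θ'<θ} dim_A^{θ'}`. -/
noncomputable def assouadSpectrumReg (E : Set (ℝ × ℝ)) (θ : ℝ) : ℝ :=
  sSup {d : ℝ | ∃ θ' : ℝ, 0 < θ' ∧ θ' < θ ∧ d = assouadSpectrum E θ'}

/-- Assouad dimension, via covering numbers. -/
noncomputable def assouadDim (E : Set (ℝ × ℝ)) : ℝ :=
  sInf {β : ℝ | 0 < β ∧ ∃ C > 0, ∀ z ∈ E, ∀ R r : ℝ, 0 < r → r ≤ R →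
    (coverN (Metric.closedBall z R ∩ E) r : ℝ) ≤ C * (R / r) ^ β}

/-- Upper box dimension, via covering numbers. -/
noncomputable def upperBoxDim (E : Set (ℝ × ℝ)) : ℝ :=
  Filter.limsup (fun r : ℝ => Real.log (coverN E r) / Real.log (1 / r)) (nhdsWithin 0 (Set.Ioi 0))

theorem key_lemma (f : ℝ → ℝ) (a b α C θ' : ℝ) (hα : 0 < α) (hα1 : α < 1)
    (hC : 0 < C)
    (hf : ∀ t ∈ Set.Icc a b, ∀ s ∈ Set.Icc a b, |f t - f s| ≤ C * |t - s| ^ α)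
    (hθ' : 0 < θ') (hθ'1 : θ' < 1) :
    assouadSpectrum (Graph' f (Set.Icc a b)) θ' ≤ (2 - α - θ') / (1 - θ') := by
  have h1θ : (0:ℝ) < 1 - θ' := by linarith
  set β := (2 - α - θ') / (1 - θ') with hβ_def
  have hβ1 : 1 ≤ β := by rw [hβ_def, le_div_iff₀ h1θ]; linarith
  have hβ0 : 0 < β := lt_of_lt_of_le one_pos hβ1
  apply csInf_le ⟨0, fun x hx => le_of_lt hx.1⟩
  refine ⟨hβ0, 8*C+8, by linarith, ?_⟩
  rintro z ⟨t0, ht0, rfl⟩ R hR0 hR1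
  set r := R ^ (1/θ') with hr_def
  have hr0 : 0 < r := Real.rpow_pos_of_pos hR0 _
  have hinv : 1 ≤ 1/θ' := by rw [le_div_iff₀ hθ']; linarith
  have hrR : r ≤ R := by
    calc r ≤ R ^ (1:ℝ) := Real.rpow_le_rpow_of_exponent_ge hR0 hR1.le hinv
    _ = R := Real.rpow_one R
  have hRr1 : 1 ≤ R / r := (one_le_div hr0).mpr hrR
  set P := (R / r) ^ β with hP_def
  -- key exact identity : R * r^(α-2) = P
  have hA1 : R * r ^ (α-2) = P := by
    have h1 : R / r = R ^ (1 - 1/θ') := by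
      rw [Real.rpow_sub hR0, Real.rpow_one]
    have h2 : r ^ (α-2) = R ^ ((1/θ') * (α-2)) := by
      rw [hr_def, ← Real.rpow_mul hR0.le]
    have h3 : P = R ^ ((1 - 1/θ') * β) := by
      rw [hP_def, h1, ← Real.rpow_mul hR0.le]
    have hexp : (1 - 1/θ') * β = 1 + (1/θ') * (α-2) := by
      rw [hβ_def]; field_simp; ring
    rw [h2, h3, hexp, Real.rpow_add hR0, Real.rpow_one]
  have hP1 : 1 ≤ P := by
    calc (1:ℝ) = (R/r) ^ (0:ℝ) := (Real.rpow_zero _).symm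
    _ ≤ P := Real.rpow_le_rpow_of_exponent_le hRr1 hβ0.le
  have hA3 : R / r ≤ P := by
    calc R / r = (R/r) ^ (1:ℝ) := (Real.rpow_one _).symm
    _ ≤ P := Real.rpow_le_rpow_of_exponent_le hRr1 hβ1
  have hA2 : r ^ (α-1) ≤ P := by
    have h1 : r ^ (α-1) = r ^ (α-2) * r := by
      rw [show α-1 = (α-2)+1 by ring, Real.rpow_add_one hr0.ne']
    rw [h1, ← hA1]
    have := Real.rpow_pos_of_pos hr0 (α-2)
    nlinarith
  -- the covering
  set N := ⌊2*R/r⌋₊ + 1 with hN_def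
  set M := ⌊2*C*r^(α-1)⌋₊ + 1 with hM_def
  set x : ℕ → ℝ := fun i => t0 - R + i*r with hx_def
  set I : ℕ → Set ℝ := fun i => Set.Icc (x i) (x i + r) with hI_def
  classical
  set τ : ℕ → ℝ := fun i => if h : (I i ∩ Set.Icc a b).Nonempty then h.choose else a
    with hτ_def
  set y : ℕ → ℕ → ℝ := fun i j => f (τ i) - C*r^α + j*r with hy_def
  set V : Fin N × Fin M → Set (ℝ×ℝ) :=
    fun p => (I p.1) ×ˢ Set.Icc (y p.1 p.2) (y p.1 p.2 + r) with hV_def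
  set U : Fin (N*M) → Set (ℝ×ℝ) := fun k => V (finProdFinEquiv.symm k) with hU_def
  have hdiamV : ∀ p, Metric.diam (V p) ≤ r := by
    intro p
    apply Metric.diam_le_of_forall_dist_le hr0.le
    rintro ⟨q1, q2⟩ ⟨hq1, hq2⟩ ⟨w1, w2⟩ ⟨hw1, hw2⟩
    rw [Prod.dist_eq]
    apply max_le
    · have := Real.dist_le_of_mem_Icc hq1 hw1; simpa using this
    · have := Real.dist_le_of_mem_Icc hq2 hw2; simpa using this
  have hcov : Metric.closedBall (t0, f t0) R ∩ Graph' f (Set.Icc a b) ⊆ ⋃ k, U k := by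
    rintro p ⟨hpball, t, ht, rfl⟩
    simp only [Metric.mem_closedBall] at hpball
    have htt0 : dist t t0 ≤ R := by
      calc dist t t0 ≤ dist ((t, f t) : ℝ × ℝ) (t0, f t0) := by
            rw [Prod.dist_eq]; exact le_max_left _ _
      _ ≤ R := hpball
    rw [Real.dist_eq, abs_le] at htt0
    set s := t - (t0 - R) with hs_def
    have hs0 : 0 ≤ s := by simp only [hs_def]; linarith [htt0.2]
    have hs2R : s ≤ 2*R := by simp only [hs_def]; linarith [htt0.1]
    set i := ⌊s/r⌋₊ with hi_def
    have hiN : i < N := by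
      rw [hN_def, Nat.lt_succ_iff]
      exact Nat.floor_le_floor (by gcongr)
    have hti : t ∈ I i := by
      constructor
      · have : (i:ℝ) ≤ s/r := Nat.floor_le (by positivity)
        have : (i:ℝ)*r ≤ s := by rw [← le_div_iff₀ hr0]; exact this
        simp only [hx_def]; linarith
      · have : s/r < i + 1 := Nat.lt_floor_add_one _
        have : s < ((i:ℝ)+1)*r := by rw [← div_lt_iff₀ hr0]; exact this
        simp only [hx_def]; push_cast; linarith
    have hne : (I i ∩ Set.Icc a b).Nonempty := ⟨t, hti, ht⟩
    have hτi : τ i ∈ I i ∩ Set.Icc a b := by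
      simp only [hτ_def, dif_pos hne]; exact hne.choose_spec
    have hdist : |t - τ i| ≤ r := by
      have := Real.dist_le_of_mem_Icc hti hτi.1
      rw [Real.dist_eq] at this; linarith
    have hfτ : |f t - f (τ i)| ≤ C * r^α := by
      calc |f t - f (τ i)| ≤ C * |t - τ i| ^ α := hf t ht (τ i) hτi.2
      _ ≤ C * r ^ α := by
          apply mul_le_mul_of_nonneg_left _ hC.le
          exact Real.rpow_le_rpow (abs_nonneg _) hdist hα.le
    rw [abs_le] at hfτ
    set u := f t - (f (τ i) - C*r^α) with hu_def
    have hu0 : 0 ≤ u := by simp only [hu_def]; linarith [hfτ.2]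
    have hu2 : u ≤ 2*C*r^α := by simp only [hu_def]; linarith [hfτ.1]
    set j := ⌊u/r⌋₊ with hj_def
    have hjM : j < M := by
      rw [hM_def, Nat.lt_succ_iff]
      apply Nat.floor_le_floor
      rw [Real.rpow_sub hr0, Real.rpow_one]
      calc u/r ≤ 2*C*r^α/r := by gcongr
      _ = 2*C*(r^α/r) := by ring
    have hfj : f t ∈ Set.Icc (y i j) (y i j + r) := by
      constructor
      · have : (j:ℝ) ≤ u/r := Nat.floor_le (by positivity)
        have : (j:ℝ)*r ≤ u := by rw [← le_div_iff₀ hr0]; exact this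
        simp only [hy_def, hu_def] at *; linarith
      · have : u/r < j + 1 := Nat.lt_floor_add_one _
        have : u < ((j:ℝ)+1)*r := by rw [← div_lt_iff₀ hr0]; exact this
        simp only [hy_def, hu_def] at *; push_cast; linarith
    refine Set.mem_iUnion.mpr ⟨finProdFinEquiv (⟨i, hiN⟩, ⟨j, hjM⟩), ?_⟩
    simp only [hU_def, Equiv.symm_apply_apply, hV_def]
    exact Set.mk_mem_prod hti hfj
  have hcN : coverN (Metric.closedBall (t0, f t0) R ∩ Graph' f (Set.Icc a b)) r ≤ N*M :=
    Nat.sInf_le ⟨U, hcov, fun k => hdiamV _⟩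
  -- numeric bound
  have hNle : (N:ℝ) ≤ 2*R/r + 1 := by
    rw [hN_def]; push_cast
    have := Nat.floor_le (show (0:ℝ) ≤ 2*R/r by positivity)
    linarith
  have hMle : (M:ℝ) ≤ 2*C*r^(α-1) + 1 := by
    rw [hM_def]; push_cast
    have := Nat.floor_le (show (0:ℝ) ≤ 2*C*r^(α-1) by positivity)
    linarith
  calc (coverN (Metric.closedBall (t0, f t0) R ∩ Graph' f (Set.Icc a b)) r : ℝ)
      ≤ ((N*M : ℕ) : ℝ) := Nat.cast_le.mpr hcN
    _ = (N:ℝ)*(M:ℝ) := by push_cast; ring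
    _ ≤ (2*R/r + 1) * (2*C*r^(α-1) + 1) := by
        apply mul_le_mul hNle hMle (by positivity) (by positivity)
    _ ≤ (8*C+8) * P := by
        have hkey : (R/r) * r^(α-1) = R * r^(α-2) := by
          rw [show α-1 = (α-2)+1 by ring, Real.rpow_add_one hr0.ne']
          field_simp
        have h1 : 2*R/r = 2*(R/r) := by ring
        nlinarith [Real.rpow_pos_of_pos hr0 (α-1), Real.rpow_pos_of_pos hr0 (α-2),
          mul_le_mul_of_nonneg_left hA2 (le_of_lt hC), hA3, hP1, hA1,
          mul_le_mul_of_nonneg_left hA3 (le_of_lt hC)]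

/-- regularized Assouad spectrum bound for Hölder graphs. -/
theorem stmt2 (f : ℝ → ℝ) (a b α C θ : ℝ) (hab : a ≤ b) (hα : 0 < α) (hα1 : α < 1)
    (hC : 0 < C)
    (hf : ∀ t ∈ Set.Icc a b, ∀ s ∈ Set.Icc a b, |f t - f s| ≤ C * |t - s| ^ α)
    (hθ : 0 < θ) (hθα : θ < α) :
    assouadSpectrumReg (Graph' f (Set.Icc a b)) θ ≤ (2 - α - θ) / (1 - θ) := by
  apply Real.sSup_le
  · rintro d ⟨θ', hθ'0, hθ'θ, rfl⟩
    have h1 : assouadSpectrum (Graph' f (Set.Icc a b)) θ' ≤ (2 - α - θ') / (1 - θ') :=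
      key_lemma f a b α C θ' hα hα1 hC hf hθ'0 (by linarith)
    refine h1.trans ?_
    rw [div_le_div_iff₀ (by linarith) (by linarith)]
    nlinarith [mul_nonneg (sub_nonneg.2 hθ'θ.le) (sub_nonneg.2 hα1.le)]
  · apply div_nonneg <;> linarith
end

section
/- Let f ∈ W^{1,p}(I), 1 < p < ∞, be continuous on a closed bounded interval I, and fix 0 < θ < p/(p+1). Then there exists a constant C (depending on θ, p, and ‖f'‖_{L^p(I)}) such that for every point z₀ = (x₀, f(x₀)) on Graph(f), every 0 < R ≤ 1, and every 0 < r ≤ R^{1/θ}, the covering number N(Q(z₀,R) ∩ Graph(f), r) ≤ C·(R/r)^{1 + θ/((1−θ)p)}, where Q(z₀,R) is the axis-parallel square of side length 2R centered at z₀. -/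
open Set Metric Filter Topology MeasureTheory

/-- Graph of `f` over `I`. -/
def funGraph (f : ℝ → ℝ) (I : Set ℝ) : Set (ℝ × ℝ) := (fun t => (t, f t)) '' I

private lemma coverN_le_card {F : Set (ℝ × ℝ)} {r : ℝ} {ι : Type*} [Fintype ι]
    (U : ι → Set (ℝ × ℝ)) (hU : F ⊆ ⋃ i, U i)
    (hd : ∀ i, Metric.diam (U i) ≤ r) :
    coverN F r ≤ Fintype.card ι := by
  apply Nat.sInf_le
  refine ⟨fun j => U ((Fintype.equivFin ι).symm j), ?_, fun j => hd _⟩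
  intro x hx
  obtain ⟨i, hi⟩ := Set.mem_iUnion.1 (hU hx)
  exact Set.mem_iUnion.2 ⟨Fintype.equivFin ι i, by simpa using hi⟩

private lemma grid_mem {u x r : ℝ} (hr : 0 < r) (hux : u ≤ x) {n : ℕ} (hn : 1 ≤ n)
    (hxn : x ≤ u + n * r) :
    ∃ i : Fin n, x ∈ Set.Icc (u + i * r) (u + i * r + r) := by
  set i0 := ⌊(x - u) / r⌋₊ with hi0
  set i := min i0 (n - 1) with hidef
  have hin : i < n := lt_of_le_of_lt (min_le_right _ _) (by omega)
  refine ⟨⟨i, hin⟩, ?_, ?_⟩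
  · have h1 : (i : ℝ) ≤ (x - u) / r := by
      calc (i : ℝ) ≤ (i0 : ℝ) := by exact_mod_cast min_le_left _ _
        _ ≤ (x - u) / r := Nat.floor_le (div_nonneg (by linarith) hr.le)
    rw [le_div_iff₀ hr] at h1
    simpa using by linarith
  · rcases le_or_gt i0 (n - 1) with h | h
    · have hii : i = i0 := min_eq_left h
      have h2 : (x - u) / r < (i0 : ℝ) + 1 := Nat.lt_floor_add_one _
      rw [div_lt_iff₀ hr] at h2
      simp only [hii]
      nlinarith
    · have hii : i = n - 1 := min_eq_right (by omega)
      have hc : ((i : ℕ) : ℝ) + 1 = (n : ℝ) := by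
        rw [hii]; push_cast [Nat.cast_sub hn]; ring
      nlinarith [hxn, hc]

private lemma young_aux {a l p : ℝ} (ha : 0 ≤ a) (hl : 0 < l) (hp : 1 < p) :
    a ≤ l + l ^ (1 - p) * a ^ p := by
  rcases le_or_gt a l with h | h
  · have h0 : (0:ℝ) ≤ l ^ (1 - p) * a ^ p :=
      mul_nonneg (Real.rpow_nonneg hl.le _) (Real.rpow_nonneg ha _)
    linarith
  · have ha0 : 0 < a := hl.trans h
    have h1 : a ^ (1 - p) ≤ l ^ (1 - p) :=
      Real.rpow_le_rpow_of_nonpos hl h.le (by linarith)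
    have h2 : a ^ (1 - p) * a ^ p = a := by
      rw [← Real.rpow_add ha0]; simp
    have h3 : (0:ℝ) ≤ a ^ p := Real.rpow_nonneg ha0.le p
    nlinarith [mul_le_mul_of_nonneg_right h1 h3]

set_option maxHeartbeats 1000000 in
/-- covering-number bound for graphs of `W^{1,p}` functions; here
`Metric.closedBall` in `ℝ × ℝ` (sup metric) is the axis-parallel square `Q(z₀, R)`. -/
theorem stmt11 (f f' : ℝ → ℝ) (a b p θ : ℝ) (hab : a ≤ b) (hp : 1 < p)
    (hθ : 0 < θ) (hθp : θ < p / (p + 1))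
    (hcont : ContinuousOn f (Set.Icc a b))
    (hInt : MeasureTheory.IntegrableOn (fun t => |f' t| ^ p) (Set.Icc a b))
    (hFTC : ∀ x ∈ Set.Icc a b, ∀ y ∈ Set.Icc a b, f x - f y = ∫ t in y..x, f' t) :
    ∃ C > 0, ∀ x₀ ∈ Set.Icc a b, ∀ R r : ℝ, 0 < R → R ≤ 1 → 0 < r → r ≤ R ^ (1/θ) →
      (coverN (Metric.closedBall (x₀, f x₀) R ∩ funGraph f (Set.Icc a b)) r : ℝ) ≤
        C * (R / r) ^ (1 + θ / ((1 - θ) * p)) := by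
  have hp0 : 0 < p := lt_trans one_pos hp
  have hθ1 : θ < 1 := lt_trans hθp (by rw [div_lt_one (by linarith)]; linarith)
  set K := ∫ t in Set.Icc a b, |f' t| ^ p with hKdef
  have hK0 : 0 ≤ K := MeasureTheory.setIntegral_nonneg measurableSet_Icc
    (fun t _ => Real.rpow_nonneg (abs_nonneg _) _)
  set α := θ / ((1 - θ) * p) with hαdef
  have hα : 0 < α := div_pos hθ (mul_pos (by linarith) hp0)
  refine ⟨10 + 2 * K, by linarith, ?_⟩
  intro x₀ hx₀ R r hR hR1 hr hrR
  have hrR' : r ≤ R := le_trans hrR (by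
    calc R ^ (1/θ) ≤ R ^ (1:ℝ) :=
          Real.rpow_le_rpow_of_exponent_ge hR hR1 (by rw [le_div_iff₀ hθ]; linarith)
      _ = R := Real.rpow_one R)
  have hRr1 : 1 ≤ R / r := (one_le_div hr).2 hrR'
  have hpow0 : (0:ℝ) ≤ (R / r) ^ (1 + α) := Real.rpow_nonneg (by positivity) _
  have hRrpow : R / r ≤ (R / r) ^ (1 + α) := by
    have h := Real.rpow_le_rpow_of_exponent_le hRr1 (by linarith : (1:ℝ) ≤ 1 + α)
    rwa [Real.rpow_one] at h
  -- key exponent inequality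
  have hkey : R ^ (1 - 1/p) / r ≤ (R / r) ^ (1 + α) := by
    have hrpow : r ^ α ≤ R ^ (α + 1/p) := by
      have h1 : r ^ α ≤ (R ^ (1/θ)) ^ α := Real.rpow_le_rpow hr.le hrR hα.le
      rw [← Real.rpow_mul hR.le] at h1
      have he : 1/θ * α = α + 1/p := by
        have hθne : θ ≠ 0 := hθ.ne'
        have h1θ : (1:ℝ) - θ ≠ 0 := ne_of_gt (by linarith)
        rw [hαdef]; field_simp; ring
      rwa [he] at h1
    rw [Real.div_rpow hR.le hr.le, div_le_div_iff₀ hr (Real.rpow_pos_of_pos hr _)]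
    have h2 : r ^ (1+α) = r * r ^ α := by rw [Real.rpow_add hr, Real.rpow_one]
    have h3 : R ^ (1+α) = R ^ (1 - 1/p) * R ^ (α + 1/p) := by
      rw [← Real.rpow_add hR]; ring_nf
    have h4 : R ^ (1 - 1/p) * r ^ α ≤ R ^ (1 - 1/p) * R ^ (α + 1/p) :=
      mul_le_mul_of_nonneg_left hrpow (Real.rpow_nonneg hR.le _)
    calc R ^ (1 - 1/p) * r ^ (1+α) = R ^ (1 - 1/p) * r ^ α * r := by rw [h2]; ring
      _ ≤ R ^ (1 - 1/p) * R ^ (α + 1/p) * r := mul_le_mul_of_nonneg_right h4 hr.le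
      _ = R ^ (1+α) * r := by rw [h3]
  -- geometry setup
  set c := max a (x₀ - R) with hcdef
  set d := min b (x₀ + R) with hddef
  have hac : a ≤ c := le_max_left _ _
  have hdb : d ≤ b := min_le_left _ _
  have hcx : c ≤ x₀ := max_le hx₀.1 (by linarith)
  have hxd : x₀ ≤ d := le_min hx₀.2 (by linarith)
  have hcd : c ≤ d := hcx.trans hxd
  have hsubI : Set.Icc c d ⊆ Set.Icc a b := Set.Icc_subset_Icc hac hdb
  have hcg : x₀ - R ≤ c := le_max_right _ _
  have hdg : d ≤ x₀ + R := min_le_right _ _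
  have hdc2R : d - c ≤ 2 * R := by linarith
  set n := max ⌈(d - c)/r⌉₊ 1 with hndef
  have hn1 : 1 ≤ n := le_max_right _ _
  have hnr : d ≤ c + n * r := by
    have h1 : (d - c)/r ≤ (n:ℝ) := le_trans (Nat.le_ceil _)
      (by exact_mod_cast Nat.le_max_left _ _)
    rw [div_le_iff₀ hr] at h1
    linarith
  have hnle : (n : ℝ) ≤ (d - c)/r + 1 := by
    have hx : (0:ℝ) ≤ (d - c)/r := div_nonneg (by linarith) hr.le
    rw [hndef]
    push_cast [Nat.cast_max]
    refine max_le ?_ (by linarith)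
    exact le_of_lt (Nat.ceil_lt_add_one hx)
  set s := fun i : ℕ => min (c + i * r) d with hsdef
  have hs0 : s 0 = c := by simp [hsdef, hcd]
  have hsn : s n = d := by simp only [hsdef]; exact min_eq_right hnr
  have hsmono : ∀ i : ℕ, s i ≤ s (i+1) := by
    intro i
    refine min_le_min (by push_cast; nlinarith) le_rfl
  have hsmem : ∀ i : ℕ, s i ∈ Set.Icc c d := by
    intro i
    exact ⟨le_min (le_add_of_nonneg_right (by positivity)) hcd, min_le_right _ _⟩
  -- integrability of |f'|
  have habs_meas : AEStronglyMeasurable (fun t => |f' t|) (volume.restrict (Set.Icc c d)) := by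
    have h1 : AEStronglyMeasurable (fun t => |f' t| ^ p) (volume.restrict (Set.Icc c d)) :=
      hInt.aestronglyMeasurable.mono_measure (Measure.restrict_mono hsubI le_rfl)
    have h2 : (fun t : ℝ => |f' t|) = fun t => (|f' t| ^ p) ^ p⁻¹ := by
      funext t
      rw [← Real.rpow_mul (abs_nonneg _), mul_inv_cancel₀ hp0.ne', Real.rpow_one]
    rw [h2]
    exact (Real.continuous_rpow_const (inv_nonneg.2 hp0.le)).comp_aestronglyMeasurable h1
  have hptwise : ∀ t : ℝ, |f' t| ≤ 1 + |f' t| ^ p := by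
    intro t
    rcases le_or_gt (|f' t|) 1 with h | h
    · have : (0:ℝ) ≤ |f' t| ^ p := Real.rpow_nonneg (abs_nonneg _) _
      linarith
    · have h1 : |f' t| ^ (1:ℝ) ≤ |f' t| ^ p :=
        Real.rpow_le_rpow_of_exponent_le h.le hp.le
      rw [Real.rpow_one] at h1
      linarith
  have hint : IntegrableOn (fun t => |f' t|) (Set.Icc c d) := by
    have hg : IntegrableOn (fun t => 1 + |f' t| ^ p) (Set.Icc c d) := by
      refine (integrableOn_const measure_Icc_lt_top.ne).add (hInt.mono_set hsubI)
    refine hg.mono' habs_meas ?_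
    refine Filter.Eventually.of_forall fun t => ?_
    rw [Real.norm_eq_abs, abs_abs]
    exact hptwise t
  have hiint : ∀ i : ℕ, IntervalIntegrable (fun t => |f' t|) volume (s i) (s (i+1)) := by
    intro i
    apply IntegrableOn.intervalIntegrable
    apply hint.mono_set
    rw [Set.uIcc_of_le (hsmono i)]
    exact Set.Icc_subset_Icc (hsmem i).1 (hsmem (i+1)).2
  set O := fun i : ℕ => ∫ t in (s i)..(s (i+1)), |f' t| with hOdef
  have hO0 : ∀ i : ℕ, 0 ≤ O i := fun i =>
    intervalIntegral.integral_nonneg (hsmono i) (fun t _ => abs_nonneg _)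
  set m := fun i : ℕ => max ⌈2 * O i / r⌉₊ 1 with hmdef
  have hm1 : ∀ i : ℕ, 1 ≤ m i := fun i => le_max_right _ _
  have hmr : ∀ i : ℕ, 2 * O i ≤ (m i) * r := by
    intro i
    have h1 : 2 * O i / r ≤ (m i : ℝ) := le_trans (Nat.le_ceil _)
      (by exact_mod_cast Nat.le_max_left _ _)
    rw [div_le_iff₀ hr] at h1
    linarith
  have hmle : ∀ i : ℕ, (m i : ℝ) ≤ 2 / r * O i + 2 := by
    intro i
    have hx : (0:ℝ) ≤ 2 * O i / r := div_nonneg (by linarith [hO0 i]) hr.le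
    have heq : 2 * O i / r = 2 / r * O i := by ring
    have h0 : (0:ℝ) ≤ 2 / r * O i := by rw [← heq]; exact hx
    rw [hmdef]
    push_cast [Nat.cast_max]
    refine max_le ?_ (by linarith)
    have h2 := le_of_lt (Nat.ceil_lt_add_one hx)
    calc (⌈2 * O i / r⌉₊ : ℝ) ≤ 2 * O i / r + 1 := h2
      _ ≤ 2 / r * O i + 2 := by rw [heq]; linarith
  -- oscillation control
  have hosc : ∀ i : ℕ, ∀ t ∈ Set.Icc (s i) (s (i+1)), |f t - f (s i)| ≤ O i := by
    intro i t ht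
    have hti : t ∈ Set.Icc a b := hsubI ⟨le_trans (hsmem i).1 ht.1, le_trans ht.2 (hsmem (i+1)).2⟩
    have hsi : s i ∈ Set.Icc a b := hsubI (hsmem i)
    rw [hFTC t hti (s i) hsi]
    calc |∫ u in (s i)..t, f' u| ≤ ∫ u in (s i)..t, |f' u| :=
          intervalIntegral.abs_integral_le_integral_abs ht.1
      _ ≤ O i := by
          refine intervalIntegral.integral_mono_interval le_rfl ht.1 ht.2 ?_ (hiint i)
          exact Filter.Eventually.of_forall fun t => abs_nonneg _
  -- sum of oscillations
  have hsum : ∑ i ∈ Finset.range n, O i = ∫ t in (s 0)..(s n), |f' t| :=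
    intervalIntegral.sum_integral_adjacent_intervals (fun i _ => hiint i)
  -- integral bound
  have hIb : (∫ t in (s 0)..(s n), |f' t|) ≤ (2 + K) * R ^ (1 - 1/p) := by
    rw [hs0, hsn, intervalIntegral.integral_of_le hcd]
    set l := R ^ (-(1/p)) with hldef
    have hl : 0 < l := Real.rpow_pos_of_pos hR _
    have hl1p : l ^ (1 - p) = R ^ (1 - 1/p) := by
      rw [hldef, ← Real.rpow_mul hR.le]
      congr 1
      field_simp
      ring
    have hInt' : IntegrableOn (fun t => |f' t| ^ p) (Set.Ioc c d) :=
      hInt.mono_set (Set.Ioc_subset_Icc_self.trans hsubI)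
    have hmono : (∫ t in Set.Ioc c d, |f' t|) ≤
        ∫ t in Set.Ioc c d, (l + l ^ (1 - p) * |f' t| ^ p) := by
      refine setIntegral_mono_on (hint.mono_set Set.Ioc_subset_Icc_self) ?_ measurableSet_Ioc ?_
      · exact (integrableOn_const measure_Ioc_lt_top.ne).add (hInt'.const_mul _)
      · intro t _
        exact young_aux (abs_nonneg _) hl hp
    have hsplit : (∫ t in Set.Ioc c d, (l + l ^ (1 - p) * |f' t| ^ p)) =
        (d - c) * l + l ^ (1 - p) * ∫ t in Set.Ioc c d, |f' t| ^ p := by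
      rw [integral_add (f := fun _ => l) (g := fun t => l ^ (1 - p) * |f' t| ^ p) (μ := volume.restrict (Set.Ioc c d)) (integrableOn_const (μ := volume) measure_Ioc_lt_top.ne enorm_ne_top : IntegrableOn (fun _ => l) (Set.Ioc c d) volume) (hInt'.const_mul (l ^ (1 - p))),
        setIntegral_const, integral_const_mul]
      rw [measureReal_def, Real.volume_Ioc, ENNReal.toReal_ofReal (by linarith : (0:ℝ) ≤ d - c)]
      simp only [smul_eq_mul]
    have hKb : (∫ t in Set.Ioc c d, |f' t| ^ p) ≤ K := by
      rw [hKdef]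
      refine setIntegral_mono_set hInt ?_ ?_
      · exact Filter.Eventually.of_forall fun t => Real.rpow_nonneg (abs_nonneg _) _
      · exact (Set.Ioc_subset_Icc_self.trans hsubI).eventuallyLE
    have hlR : l * R = R ^ (1 - 1/p) := by
      rw [hldef]
      nth_rewrite 2 [show R = R ^ (1:ℝ) from (Real.rpow_one R).symm]
      rw [← Real.rpow_add hR]
      congr 1
      ring
    calc (∫ t in Set.Ioc c d, |f' t|) ≤ (d - c) * l + l ^ (1 - p) * ∫ t in Set.Ioc c d, |f' t| ^ p := by
          rw [← hsplit]; exact hmono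
      _ ≤ 2 * R * l + l ^ (1 - p) * K := by
          have h1 : (d - c) * l ≤ 2 * R * l := mul_le_mul_of_nonneg_right hdc2R hl.le
          have h2 : l ^ (1 - p) * (∫ t in Set.Ioc c d, |f' t| ^ p) ≤ l ^ (1 - p) * K :=
            mul_le_mul_of_nonneg_left hKb (Real.rpow_nonneg hl.le _)
          linarith
      _ = (2 + K) * R ^ (1 - 1/p) := by
          rw [hl1p]
          have : 2 * R * l = 2 * (l * R) := by ring
          rw [this, hlR]; ring
  -- the cover
  set U : (Σ i : Fin n, Fin (m i)) → Set (ℝ × ℝ) := fun q =>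
    Set.Icc (c + q.1 * r) (c + q.1 * r + r) ×ˢ
      Set.Icc ((f (s q.1) - O q.1) + q.2 * r) ((f (s q.1) - O q.1) + q.2 * r + r) with hUdef
  have hdiam : ∀ q, Metric.diam (U q) ≤ r := by
    intro q
    apply Metric.diam_le_of_forall_dist_le hr.le
    rintro ⟨z1, z2⟩ hz ⟨w1, w2⟩ hw
    rw [hUdef] at hz hw
    obtain ⟨hz1, hz2⟩ := hz
    obtain ⟨hw1, hw2⟩ := hw
    rw [Prod.dist_eq]
    refine max_le ?_ ?_
    · rw [Real.dist_eq, abs_le]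
      exact ⟨by linarith [hz1.1, hw1.2], by linarith [hz1.2, hw1.1]⟩
    · rw [Real.dist_eq, abs_le]
      exact ⟨by linarith [hz2.1, hw2.2], by linarith [hz2.2, hw2.1]⟩
  have hcover : Metric.closedBall (x₀, f x₀) R ∩ funGraph f (Set.Icc a b) ⊆ ⋃ q, U q := by
    rintro z ⟨hzB, t, htab, rfl⟩
    have hd1 : dist t x₀ ≤ R := by
      have h := Metric.mem_closedBall.1 hzB
      rw [Prod.dist_eq] at h
      exact le_trans (le_max_left _ _) h
    rw [Real.dist_eq, abs_le] at hd1
    have htc : c ≤ t := max_le htab.1 (by linarith [hd1.1])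
    have htd : t ≤ d := le_min htab.2 (by linarith [hd1.2])
    obtain ⟨i, hti⟩ := grid_mem hr htc hn1 (htd.trans hnr)
    have hts : t ∈ Set.Icc (s ↑i) (s (↑i + 1)) := by
      constructor
      · exact le_trans (min_le_left _ _) hti.1
      · refine le_min ?_ htd
        push_cast
        linarith [hti.2]
    have hfo := hosc ↑i t hts
    rw [abs_le] at hfo
    obtain ⟨j, hfj⟩ := grid_mem hr (show f (s ↑i) - O ↑i ≤ f t by linarith [hfo.1]) (hm1 ↑i)
      (show f t ≤ (f (s ↑i) - O ↑i) + (m ↑i) * r by linarith [hfo.2, hmr ↑i])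
    refine Set.mem_iUnion.2 ⟨⟨i, j⟩, ?_⟩
    rw [hUdef]
    exact ⟨hti, hfj⟩
  -- counting
  have hNle : coverN (Metric.closedBall (x₀, f x₀) R ∩ funGraph f (Set.Icc a b)) r
      ≤ ∑ i ∈ Finset.range n, m i := by
    have h := coverN_le_card U hcover hdiam
    have hcard : Fintype.card (Σ i : Fin n, Fin (m ↑i)) = ∑ i ∈ Finset.range n, m i := by
      rw [Fintype.card_sigma]
      simp [Fin.sum_univ_eq_sum_range]
    rwa [hcard] at h
  have hsum2 : ∑ i ∈ Finset.range n, O i ≤ (2 + K) * R ^ (1 - 1/p) := by rw [hsum]; exact hIb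
  calc (coverN (Metric.closedBall (x₀, f x₀) R ∩ funGraph f (Set.Icc a b)) r : ℝ)
      ≤ ∑ i ∈ Finset.range n, (m i : ℝ) := by exact_mod_cast hNle
    _ ≤ ∑ i ∈ Finset.range n, (2 / r * O i + 2) := Finset.sum_le_sum (fun i _ => hmle i)
    _ = 2 / r * (∑ i ∈ Finset.range n, O i) + 2 * n := by
        rw [Finset.sum_add_distrib, ← Finset.mul_sum, Finset.sum_const, Finset.card_range]
        push_cast
        ring
    _ ≤ 2 / r * ((2 + K) * R ^ (1 - 1/p)) + 2 * n := by
        have h := mul_le_mul_of_nonneg_left hsum2 (by positivity : (0:ℝ) ≤ 2 / r)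
        linarith
    _ ≤ (4 + 2*K) * (R / r) ^ (1 + α) + 6 * (R / r) ^ (1 + α) := by
        have hA : 2 / r * ((2 + K) * R ^ (1 - 1/p)) = (4 + 2*K) * (R ^ (1 - 1/p) / r) := by
          ring
        have hA2 : (4 + 2*K) * (R ^ (1 - 1/p) / r) ≤ (4 + 2*K) * (R / r) ^ (1 + α) :=
          mul_le_mul_of_nonneg_left hkey (by linarith)
        have hdr : (d - c)/r ≤ 2 * R / r := by gcongr
        have h2Rr : 2 * R / r = 2 * (R / r) := by ring
        have hB : (n:ℝ) ≤ 3 * (R / r) := by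
          rw [h2Rr] at hdr
          linarith [hnle, hRr1]
        have hB2 : 2 * (n:ℝ) ≤ 6 * (R / r) ^ (1 + α) := by
          have h6 : 6 * (R / r) ≤ 6 * (R / r) ^ (1 + α) := by linarith [hRrpow]
          linarith
        linarith
    _ = (10 + 2*K) * (R / r) ^ (1 + α) := by ring
end

section
/- Let f ∈ W^{1,p}(I) for 1 ≤ p ≤ ∞ be a continuous real-valued function on a closed bounded interval I. Then for every θ with 0 < θ < p/(p+1), dim_{A,reg}^θ(Graph(f)) ≤ 1 + θ/((1−θ)p). -/
open Set Metric Filter Topology MeasureTheory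

/-- Graph of `f` over `I`. -/
def FunGraph (f : ℝ → ℝ) (I : Set ℝ) : Set (ℝ × ℝ) := (fun t => (t, f t)) '' I

/-! ### Auxiliary lemmas -/

lemma subdivAux {x0 r x : ℝ} (hr : 0 < r) {m : ℕ} (hm : 1 ≤ m) (h1 : x0 ≤ x)
    (h2 : x ≤ x0 + m * r) :
    ∃ i : ℕ, i < m ∧ x0 + i*r ≤ x ∧ x ≤ x0 + (i+1)*r := by
  set i := min (m-1) ⌊(x - x0)/r⌋₊ with hidef
  have him : i < m := lt_of_le_of_lt (min_le_left _ _) (Nat.sub_lt hm one_pos)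
  have hup : (x - x0)/r ≤ (i:ℝ) + 1 := by
    rcases le_total (m-1 : ℕ) ⌊(x-x0)/r⌋₊ with h | h
    · have hieq : i = m - 1 := min_eq_left h
      have hc : ((m-1:ℕ):ℝ) = (m:ℝ) - 1 := by
        push_cast [Nat.cast_sub hm]; ring
      rw [hieq, hc]
      have : (x - x0)/r ≤ (m:ℝ) := (div_le_iff₀ hr).2 (by linarith)
      linarith
    · have hieq : i = ⌊(x-x0)/r⌋₊ := min_eq_right h
      rw [hieq]
      exact (Nat.lt_floor_add_one _).le
  have hlow : (i:ℝ) ≤ (x - x0)/r :=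
    le_trans (Nat.cast_le.2 (min_le_right _ _)) (Nat.floor_le (div_nonneg (by linarith) hr.le))
  refine ⟨i, him, ?_, ?_⟩
  · have := (le_div_iff₀ hr).1 hlow
    linarith
  · have := (div_le_iff₀ hr).1 hup
    linarith

lemma coverN_le {ι : Type} [Fintype ι] {F : Set (ℝ×ℝ)} {r : ℝ} (U : ι → Set (ℝ×ℝ))
    (hU : F ⊆ ⋃ i, U i) (hd : ∀ i, Metric.diam (U i) ≤ r) : coverN F r ≤ Fintype.card ι := by
  apply Nat.sInf_le
  refine ⟨fun j => U ((Fintype.equivFin ι).symm j), ?_, fun j => hd _⟩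
  rwa [(Fintype.equivFin ι).symm.surjective.iUnion_comp U]

lemma diam_rect {c1 d1 c2 d2 r : ℝ} (h1 : d1 - c1 ≤ r) (h2 : d2 - c2 ≤ r) (hr : 0 ≤ r) :
    Metric.diam (Icc c1 d1 ×ˢ Icc c2 d2) ≤ r := by
  apply Metric.diam_le_of_forall_dist_le hr
  rintro p hp q hq
  rw [Set.mem_prod] at hp hq
  rw [Prod.dist_eq]
  exact max_le ((Real.dist_le_of_mem_Icc hp.1 hq.1).trans h1)
    ((Real.dist_le_of_mem_Icc hp.2 hq.2).trans h2)

lemma colOsc (f f' : ℝ → ℝ) (a b c d : ℝ)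
    (hcont : ContinuousOn f (Set.Icc a b))
    (hFTC : ∀ x ∈ Set.Icc a b, ∀ y ∈ Set.Icc a b, f x - f y = ∫ t in y..x, f' t)
    (hInt : IntegrableOn f' (Set.Icc a b) volume)
    (hac : a ≤ c) (hdb : d ≤ b) :
    0 ≤ sSup (f '' Icc c d) - sInf (f '' Icc c d) ∧
      sSup (f '' Icc c d) - sInf (f '' Icc c d) ≤ ∫ t in Icc c d, |f' t| := by
  rcases lt_or_ge d c with h | h
  · rw [Icc_eq_empty_of_lt h]
    simp [Real.sSup_empty, Real.sInf_empty]
  · have hsub : Icc c d ⊆ Icc a b := Icc_subset_Icc hac hdb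
    have hfc : ContinuousOn f (Icc c d) := hcont.mono hsub
    have hne : (Icc c d).Nonempty := ⟨c, left_mem_Icc.2 h⟩
    obtain ⟨t1, ht1K, ht1⟩ := isCompact_Icc.exists_isMaxOn hne hfc
    obtain ⟨t2, ht2K, ht2⟩ := isCompact_Icc.exists_isMinOn hne hfc
    have himg : IsCompact (f '' Icc c d) := isCompact_Icc.image_of_continuousOn hfc
    have hine : (f '' Icc c d).Nonempty := hne.image f
    have hSup : sSup (f '' Icc c d) ≤ f t1 := csSup_le hine (by rintro y ⟨x, hx, rfl⟩; exact ht1 hx)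
    have hInf : f t2 ≤ sInf (f '' Icc c d) := le_csInf hine (by rintro y ⟨x, hx, rfl⟩; exact ht2 hx)
    have hmem : f c ∈ f '' Icc c d := ⟨c, left_mem_Icc.2 h, rfl⟩
    have h0 : sInf (f '' Icc c d) ≤ sSup (f '' Icc c d) :=
      (csInf_le himg.bddBelow hmem).trans (le_csSup himg.bddAbove hmem)
    refine ⟨by linarith, ?_⟩
    have hIsub : Set.uIoc t2 t1 ⊆ Icc c d := by
      refine subset_trans Set.Ioc_subset_Icc_self ?_
      exact Icc_subset_Icc (le_inf ht2K.1 ht1K.1) (sup_le ht2K.2 ht1K.2)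
    calc sSup (f '' Icc c d) - sInf (f '' Icc c d) ≤ f t1 - f t2 := by linarith
      _ = ∫ t in t2..t1, f' t := hFTC t1 (hsub ht1K) t2 (hsub ht2K)
      _ ≤ |∫ t in t2..t1, f' t| := le_abs_self _
      _ ≤ ∫ t in Set.uIoc t2 t1, |f' t| := by
          simpa [Real.norm_eq_abs] using
            intervalIntegral.norm_integral_le_integral_norm_uIoc (a := t2) (b := t1) (f := f')
      _ ≤ ∫ t in Icc c d, |f' t| := by
          refine setIntegral_mono_set ((hInt.mono_set hsub).abs) ?_
            (HasSubset.Subset.eventuallyLE hIsub)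
          exact Filter.Eventually.of_forall fun x => abs_nonneg _

lemma holderBound (f' : ℝ → ℝ) (a b : ℝ) (p : ENNReal) (hp : 1 ≤ p)
    (hLp : MeasureTheory.MemLp f' p (volume.restrict (Set.Icc a b)))
    {W : Set ℝ} (hW : W ⊆ Set.Icc a b) {M : ℝ} (hM : 0 ≤ M)
    (hvol : volume W ≤ ENNReal.ofReal M) :
    ∫ t in W, |f' t| ≤
      (eLpNorm f' p (volume.restrict (Set.Icc a b))).toReal * M ^ (1 - (p.toReal)⁻¹) := by
  set μI := volume.restrict (Set.Icc a b) with hμI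
  set ν := volume.restrict W with hν
  have hle : ν ≤ μI := Measure.restrict_mono hW le_rfl
  have hmeas : AEStronglyMeasurable f' ν := hLp.1.mono_measure hle
  have hσ1 : (p.toReal)⁻¹ ≤ 1 := by
    rcases eq_or_ne p ⊤ with h | h
    · simp [h]
    · have h1 : (1:ℝ) ≤ p.toReal := by
        simpa using ENNReal.toReal_mono h hp
      exact inv_le_one_of_one_le₀ h1
  have h1 : ∫ t in W, |f' t| = (∫⁻ t, ‖f' t‖ₑ ∂ν).toReal := by
    simpa [Real.norm_eq_abs] using integral_norm_eq_lintegral_enorm hmeas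
  have h2 : eLpNorm f' 1 ν = ∫⁻ t, ‖f' t‖ₑ ∂ν := eLpNorm_one_eq_lintegral_enorm
  have h3 : eLpNorm f' 1 ν ≤ eLpNorm f' p ν * (ν Set.univ) ^ (1 - (p.toReal)⁻¹) := by
    have := eLpNorm_le_eLpNorm_mul_rpow_measure_univ (p := 1) (q := p) hp hmeas
    simpa [ENNReal.toReal_one, one_div] using this
  have h4 : eLpNorm f' p ν ≤ eLpNorm f' p μI := eLpNorm_mono_measure _ hle
  have h5 : ν Set.univ = volume W := by rw [hν, Measure.restrict_apply_univ]
  have h6 : (ν Set.univ) ^ (1 - (p.toReal)⁻¹) ≤ (ENNReal.ofReal M) ^ (1 - (p.toReal)⁻¹) := by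
    rw [h5]; exact ENNReal.rpow_le_rpow hvol (by linarith)
  have hchain : eLpNorm f' 1 ν ≤ eLpNorm f' p μI * (ENNReal.ofReal M) ^ (1 - (p.toReal)⁻¹) :=
    h3.trans (mul_le_mul' h4 h6)
  have hfin : eLpNorm f' p μI * (ENNReal.ofReal M) ^ (1 - (p.toReal)⁻¹) ≠ ⊤ :=
    ENNReal.mul_ne_top hLp.2.ne (ENNReal.rpow_ne_top_of_nonneg (by linarith) ENNReal.ofReal_ne_top)
  calc ∫ t in W, |f' t| = (eLpNorm f' 1 ν).toReal := by rw [h1, h2]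
    _ ≤ (eLpNorm f' p μI * (ENNReal.ofReal M) ^ (1 - (p.toReal)⁻¹)).toReal :=
        ENNReal.toReal_mono hfin hchain
    _ = (eLpNorm f' p μI).toReal * M ^ (1 - (p.toReal)⁻¹) := by
        rw [ENNReal.toReal_mul, ← ENNReal.toReal_rpow, ENNReal.toReal_ofReal hM]

lemma expArith {θ θ' σ : ℝ} (hθ' : 0 < θ') (hθ'θ : θ' ≤ θ) (hθ1 : θ < 1) (hσ0 : 0 ≤ σ) :
    (1 - 1/θ') * (1 + θ*σ/(1-θ)) ≤ 1 - σ - 1/θ' := by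
  have h1 : (0:ℝ) < 1 - θ := by linarith
  have hθ'ne : θ' ≠ 0 := ne_of_gt hθ'
  have h2 : 0 ≤ σ * (θ - θ') := mul_nonneg hσ0 (by linarith)
  have key : (θ' - 1) * ((1-θ) + θ*σ) ≤ (θ'*(1-σ) - 1) * (1-θ) := by nlinarith
  have e1 : (1 - 1/θ') * (1 + θ*σ/(1-θ)) = ((θ' - 1) * ((1-θ) + θ*σ)) / (θ' * (1-θ)) := by
    field_simp
  have e2 : 1 - σ - 1/θ' = ((θ'*(1-σ) - 1) * (1-θ)) / (θ' * (1-θ)) := by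
    field_simp
  rw [e1, e2]
  have h3 : (0:ℝ) < θ' * (1-θ) := mul_pos hθ' h1
  gcongr

/-- regularized Assouad spectrum bound for Sobolev graphs, `1 ≤ p ≤ ∞`.
The condition `0 < θ < p/(p+1)` is encoded as `θ < 1` and `θ/(1-θ) < p`; for `p = ∞` the
bound `1 + θ/((1-θ)·p.toReal)` equals `1` by the convention `x/0 = 0`. -/
theorem stmt12 (f f' : ℝ → ℝ) (a b : ℝ) (p : ENNReal) (θ : ℝ) (hab : a ≤ b) (hp : 1 ≤ p)
    (hcont : ContinuousOn f (Set.Icc a b))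
    (hLp : MeasureTheory.MemLp f' p (MeasureTheory.volume.restrict (Set.Icc a b)))
    (hFTC : ∀ x ∈ Set.Icc a b, ∀ y ∈ Set.Icc a b, f x - f y = ∫ t in y..x, f' t)
    (hθ : 0 < θ) (hθ1 : θ < 1) (hθp : ENNReal.ofReal (θ / (1 - θ)) < p) :
    assouadSpectrumReg (FunGraph f (Set.Icc a b)) θ ≤ 1 + θ / ((1 - θ) * p.toReal) := by
  have h1θ : (0:ℝ) < 1 - θ := by linarith
  set σ : ℝ := (p.toReal)⁻¹ with hσdef
  have hσ0 : 0 ≤ σ := inv_nonneg.2 ENNReal.toReal_nonneg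
  have hσ1 : σ ≤ 1 := by
    rcases eq_or_ne p ⊤ with h | h
    · simp [hσdef, h]
    · have h1 : (1:ℝ) ≤ p.toReal := by simpa using ENNReal.toReal_mono h hp
      exact inv_le_one_of_one_le₀ h1
  have hEq : θ / ((1 - θ) * p.toReal) = θ * σ / (1 - θ) := by
    rw [div_mul_eq_div_div_swap, div_eq_mul_inv, hσdef]
    ring
  rw [hEq]
  set β : ℝ := 1 + θ * σ / (1 - θ) with hβdef
  have hβ1 : 1 ≤ β := le_add_of_nonneg_right (div_nonneg (mul_nonneg hθ.le hσ0) h1θ.le)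
  -- finiteness of the restricted measure, integrability of f'
  haveI : IsFiniteMeasure (volume.restrict (Set.Icc a b)) := by
    constructor
    rw [Measure.restrict_apply_univ, Real.volume_Icc]
    exact ENNReal.ofReal_lt_top
  have hInt : IntegrableOn f' (Set.Icc a b) volume := hLp.integrable hp
  set A : ℝ := (eLpNorm f' p (volume.restrict (Set.Icc a b))).toReal with hAdef
  have hA0 : 0 ≤ A := ENNReal.toReal_nonneg
  apply Real.sSup_le _ (by linarith)
  rintro dd ⟨θ', hθ'0, hθ'θ, rfl⟩
  have hθ'1 : θ' < 1 := hθ'θ.trans hθ1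
  refine csInf_le ⟨0, fun x hx => hx.1.le⟩ ?_
  refine ⟨by linarith, 3 + 3*A, by linarith, ?_⟩
  intro z hz R hR0 hR1
  set r : ℝ := R ^ (1/θ') with hrdef
  have hr0 : 0 < r := Real.rpow_pos_of_pos hR0 _
  have h1θ' : (1:ℝ) ≤ 1/θ' := by rw [le_div_iff₀ hθ'0]; linarith
  have hrR : r ≤ R := by
    calc r = R ^ (1/θ') := rfl
      _ ≤ R ^ (1:ℝ) := Real.rpow_le_rpow_of_exponent_ge hR0 hR1.le h1θ'
      _ = R := Real.rpow_one R
  have hRr1 : (1:ℝ) ≤ R / r := (one_le_div hr0).2 hrR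
  set x0 : ℝ := z.1 - R with hx0def
  set n : ℕ := max 1 ⌈2*R/r⌉₊ with hndef
  have hn1 : 1 ≤ n := le_max_left _ _
  have hnR : 2*R ≤ (n:ℝ)*r := by
    have h1 : (2*R/r : ℝ) ≤ (⌈2*R/r⌉₊ : ℝ) := Nat.le_ceil _
    have h2 : ((⌈2*R/r⌉₊ : ℕ) : ℝ) ≤ (n:ℝ) := Nat.cast_le.2 (le_max_right _ _)
    calc 2*R = (2*R/r)*r := by field_simp
      _ ≤ (n:ℝ)*r := mul_le_mul_of_nonneg_right (h1.trans h2) hr0.le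
  have hnR3 : (n:ℝ)*r ≤ 3*R := by
    have h0 : (0:ℝ) ≤ 2*R/r := by positivity
    have h1 : (n:ℝ) ≤ 2*R/r + 1 := by
      rw [hndef, Nat.cast_max]
      exact max_le (by linarith) (Nat.ceil_lt_add_one h0).le
    calc (n:ℝ)*r ≤ (2*R/r + 1)*r := mul_le_mul_of_nonneg_right h1 hr0.le
      _ = 2*R + r := by field_simp
      _ ≤ 3*R := by linarith
  -- columns
  set c : ℕ → ℝ := fun i => max a (x0 + i*r) with hcdef
  set d : ℕ → ℝ := fun i => min b (x0 + (i+1)*r) with hddef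
  set lo : ℕ → ℝ := fun i => sInf (f '' Icc (c i) (d i)) with hlodef
  set hi : ℕ → ℝ := fun i => sSup (f '' Icc (c i) (d i)) with hhidef
  set o : ℕ → ℝ := fun i => ∫ t in Icc (c i) (d i), |f' t| with hodef
  have hcol : ∀ i : ℕ, 0 ≤ hi i - lo i ∧ hi i - lo i ≤ o i := fun i =>
    colOsc f f' a b (c i) (d i) hcont hFTC hInt (le_max_left _ _) (min_le_left _ _)
  have ho0 : ∀ i : ℕ, 0 ≤ o i := fun i =>
    setIntegral_nonneg measurableSet_Icc (fun _ _ => abs_nonneg _)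
  set m : ℕ → ℕ := fun i => max 1 ⌈(hi i - lo i)/r⌉₊ with hmdef
  have hm1 : ∀ i, 1 ≤ m i := fun i => le_max_left _ _
  have hmle : ∀ i, (m i : ℝ) ≤ 1 + o i / r := by
    intro i
    have h0 : 0 ≤ (hi i - lo i)/r := div_nonneg (hcol i).1 hr0.le
    have hoi : (hi i - lo i)/r ≤ o i / r :=
      div_le_div_of_nonneg_right (hcol i).2 hr0.le
    rw [hmdef, Nat.cast_max]
    have h2 : (0:ℝ) ≤ o i / r := div_nonneg (ho0 i) hr0.le
    refine max_le (by push_cast; linarith) ?_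
    have := (Nat.ceil_lt_add_one h0).le
    push_cast
    linarith
  -- the cover
  set U : (Σ i : Fin n, Fin (m i)) → Set (ℝ×ℝ) := fun ij =>
    Icc (x0 + ((ij.1:ℕ):ℝ)*r) (x0 + (((ij.1:ℕ):ℝ)+1)*r) ×ˢ
      Icc (lo ij.1 + ((ij.2:ℕ):ℝ)*r) (lo ij.1 + (((ij.2:ℕ):ℝ)+1)*r) with hUdef
  have hdiam : ∀ ij, Metric.diam (U ij) ≤ r :=
    fun ij => diam_rect (by push_cast; linarith) (by push_cast; linarith) hr0.le
  -- coverage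
  have hcover : Metric.closedBall z R ∩ FunGraph f (Set.Icc a b) ⊆ ⋃ ij, U ij := by
    rintro w ⟨hwB, t, ht, rfl⟩
    have hd : dist ((t, f t) : ℝ × ℝ) z ≤ R := mem_closedBall.1 hwB
    rw [Prod.dist_eq] at hd
    have h1 : dist t z.1 ≤ R := le_trans (le_max_left _ _) hd
    rw [Real.dist_eq, abs_le] at h1
    obtain ⟨h1a, h1b⟩ := h1
    obtain ⟨i, hiN, hti1, hti2⟩ := subdivAux hr0 hn1 (show x0 ≤ t by linarith [hx0def])
      (show t ≤ x0 + (n:ℝ)*r by linarith [hx0def, hnR])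
    have htK : t ∈ Icc (c i) (d i) :=
      ⟨max_le ht.1 hti1, le_min ht.2 hti2⟩
    have hKsub : Icc (c i) (d i) ⊆ Set.Icc a b :=
      Icc_subset_Icc (le_max_left _ _) (min_le_left _ _)
    have hfc : ContinuousOn f (Icc (c i) (d i)) := hcont.mono hKsub
    have himg : IsCompact (f '' Icc (c i) (d i)) := isCompact_Icc.image_of_continuousOn hfc
    have hmemf : f t ∈ f '' Icc (c i) (d i) := ⟨t, htK, rfl⟩
    have hflo : lo i ≤ f t := csInf_le himg.bddBelow hmemf
    have hftup : f t ≤ lo i + (m i : ℝ) * r := by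
      have hfhi : f t ≤ hi i := le_csSup himg.bddAbove hmemf
      have hceil : (hi i - lo i)/r ≤ (⌈(hi i - lo i)/r⌉₊ : ℝ) := Nat.le_ceil _
      have hcm : ((⌈(hi i - lo i)/r⌉₊ : ℕ) : ℝ) ≤ (m i : ℝ) := Nat.cast_le.2 (le_max_right _ _)
      have h2 : hi i - lo i ≤ (m i : ℝ) * r := by
        have := (div_le_iff₀ hr0).1 (hceil.trans hcm)
        linarith
      linarith
    obtain ⟨j, hjm, hfj1, hfj2⟩ := subdivAux hr0 (hm1 i) hflo hftup
    apply mem_iUnion.2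
    refine ⟨⟨⟨i, hiN⟩, ⟨j, hjm⟩⟩, ?_⟩
    rw [hUdef, Set.mem_prod]
    exact ⟨⟨hti1, hti2⟩, ⟨hfj1, hfj2⟩⟩
  -- covering number bound
  have hN : (coverN (Metric.closedBall z R ∩ FunGraph f (Set.Icc a b)) r : ℝ) ≤
      ∑ i : Fin n, (m i : ℝ) := by
    have h1 := coverN_le U hcover hdiam
    have hcard : Fintype.card (Σ i : Fin n, Fin (m i)) = ∑ i : Fin n, m i := by
      simp [Fintype.card_sigma]
    rw [hcard] at h1
    calc (coverN (Metric.closedBall z R ∩ FunGraph f (Set.Icc a b)) r : ℝ)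
        ≤ ((∑ i : Fin n, m i : ℕ) : ℝ) := Nat.cast_le.2 h1
      _ = ∑ i : Fin n, (m i : ℝ) := Nat.cast_sum _ _
  -- sum of oscillation integrals
  have hsumo : ∑ i : Fin n, o i ≤ A * (3 * R ^ (1 - σ)) := by
    set W : Set ℝ := Set.Icc a b ∩ Ioc x0 (x0 + (n:ℝ)*r) with hWdef
    have hWsub : W ⊆ Set.Icc a b := inter_subset_left
    have hIntW : IntegrableOn (fun t => |f' t|) W volume := (hInt.mono_set hWsub).abs
    have hsubW : ∀ i : Fin n, Ioc (c i) (d i) ⊆ W := by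
      rintro i x ⟨hx1, hx2⟩
      have hci : x0 + ((i:ℕ):ℝ)*r ≤ c i := le_max_right _ _
      have hdi : d i ≤ x0 + (((i:ℕ):ℝ)+1)*r := min_le_right _ _
      have hin : ((i:ℕ):ℝ) + 1 ≤ (n:ℝ) := by exact_mod_cast i.2
      have hir : (0:ℝ) ≤ ((i:ℕ):ℝ)*r := mul_nonneg (Nat.cast_nonneg _) hr0.le
      have hnr2 : (((i:ℕ):ℝ)+1)*r ≤ (n:ℝ)*r := mul_le_mul_of_nonneg_right hin hr0.le
      refine ⟨⟨le_trans (le_max_left _ _) hx1.le, le_trans hx2 (min_le_left _ _)⟩, ?_, ?_⟩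
      · linarith
      · linarith
    have key : ∀ i j : Fin n, (i:ℕ) < (j:ℕ) →
        Disjoint (Ioc (c i) (d i)) (Ioc (c j) (d j)) := by
      intro i j hij
      apply Set.Ioc_disjoint_Ioc.2
      have h1 : d i ≤ x0 + (((i:ℕ):ℝ)+1)*r := min_le_right _ _
      have h2 : x0 + ((j:ℕ):ℝ)*r ≤ c j := le_max_right _ _
      have h3 : ((i:ℕ):ℝ) + 1 ≤ ((j:ℕ):ℝ) := by exact_mod_cast hij
      have h4 : (((i:ℕ):ℝ)+1)*r ≤ ((j:ℕ):ℝ)*r := mul_le_mul_of_nonneg_right h3 hr0.le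
      calc min (d i) (d j) ≤ d i := min_le_left _ _
        _ ≤ c j := by linarith
        _ ≤ max (c i) (c j) := le_max_right _ _
    have hdisj : ((Finset.univ : Finset (Fin n)) : Set (Fin n)).Pairwise
        (Function.onFun Disjoint (fun i : Fin n => Ioc (c i) (d i))) := by
      intro i _ j _ hij
      rcases Nat.lt_or_ge (i:ℕ) (j:ℕ) with h | h
      · exact key i j h
      · have h' : (j:ℕ) < (i:ℕ) := lt_of_le_of_ne h (fun hcontra => hij (Fin.ext hcontra.symm))
        exact (key j i h').symm
    have hcalc : ∑ i : Fin n, o i = ∑ i : Fin n, ∫ t in Ioc (c i) (d i), |f' t| :=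
      Finset.sum_congr rfl fun i _ => (setIntegral_congr_set Ioc_ae_eq_Icc).symm
    have hunion : ∑ i : Fin n, ∫ t in Ioc (c i) (d i), |f' t| =
        ∫ t in ⋃ i ∈ (Finset.univ : Finset (Fin n)), Ioc (c i) (d i), |f' t| :=
      (integral_biUnion_finset Finset.univ (fun i _ => measurableSet_Ioc) hdisj
        (fun i _ => hIntW.mono_set (hsubW i))).symm
    have hmono : ∫ t in ⋃ i ∈ (Finset.univ : Finset (Fin n)), Ioc (c i) (d i), |f' t| ≤
        ∫ t in W, |f' t| := by
      refine setIntegral_mono_set hIntW (Filter.Eventually.of_forall fun x => abs_nonneg _) ?_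
      exact HasSubset.Subset.eventuallyLE (iUnion₂_subset fun i _ => hsubW i)
    have hvol : volume W ≤ ENNReal.ofReal (3*R) := by
      calc volume W ≤ volume (Ioc x0 (x0 + (n:ℝ)*r)) := measure_mono inter_subset_right
        _ = ENNReal.ofReal ((x0 + (n:ℝ)*r) - x0) := Real.volume_Ioc
        _ ≤ ENNReal.ofReal (3*R) := ENNReal.ofReal_le_ofReal (by linarith)
    have hhold : ∫ t in W, |f' t| ≤ A * (3*R) ^ (1 - σ) := by
      rw [hAdef, hσdef]
      exact holderBound f' a b p hp hLp hWsub (by linarith) hvol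
    have h3R : (3*R:ℝ) ^ (1-σ) ≤ 3 * R ^ (1-σ) := by
      rw [Real.mul_rpow (by norm_num) hR0.le]
      have h31 : (3:ℝ) ^ (1-σ) ≤ 3 := by
        calc (3:ℝ) ^ (1-σ) ≤ (3:ℝ) ^ (1:ℝ) :=
              Real.rpow_le_rpow_of_exponent_le (by norm_num) (by linarith)
          _ = 3 := Real.rpow_one 3
      exact mul_le_mul_of_nonneg_right h31 (Real.rpow_nonneg hR0.le _)
    calc ∑ i : Fin n, o i = ∑ i : Fin n, ∫ t in Ioc (c i) (d i), |f' t| := hcalc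
      _ = ∫ t in ⋃ i ∈ (Finset.univ : Finset (Fin n)), Ioc (c i) (d i), |f' t| := hunion
      _ ≤ ∫ t in W, |f' t| := hmono
      _ ≤ A * (3*R) ^ (1 - σ) := hhold
      _ ≤ A * (3 * R ^ (1-σ)) := mul_le_mul_of_nonneg_left h3R hA0
  -- summing the column counts
  have hsum2 : ∑ i : Fin n, (m i : ℝ) ≤ (n:ℝ) + (∑ i : Fin n, o i)/r := by
    calc ∑ i : Fin n, (m i:ℝ) ≤ ∑ i : Fin n, (1 + o i / r) :=
          Finset.sum_le_sum (fun i _ => hmle i)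
      _ = (n:ℝ) + (∑ i : Fin n, o i)/r := by
          rw [Finset.sum_add_distrib, Finset.sum_div]
          simp [Finset.card_univ]
  -- rpow comparisons
  have hkey1 : R/r ≤ (R/r)^β := by
    calc R/r = (R/r)^(1:ℝ) := (Real.rpow_one _).symm
      _ ≤ (R/r)^β := Real.rpow_le_rpow_of_exponent_le hRr1 hβ1
  have hkey2 : R^(1-σ)/r ≤ (R/r)^β := by
    have hexp := expArith hθ'0 hθ'θ.le hθ1 hσ0
    have e1 : R^(1-σ)/r = R^(1-σ-1/θ') := by
      rw [hrdef, ← Real.rpow_sub hR0]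
    have e0 : R/r = R^((1:ℝ)-1/θ') := by
      rw [hrdef, Real.rpow_sub hR0, Real.rpow_one]
    have e2 : (R/r)^β = R^((1-1/θ')*β) := by
      rw [e0, ← Real.rpow_mul hR0.le]
    rw [e1, e2, hβdef]
    exact Real.rpow_le_rpow_of_exponent_ge hR0 hR1.le hexp
  -- finish
  have hnle : (n:ℝ) ≤ 3*R/r := (le_div_iff₀ hr0).2 (by linarith)
  have hole : (∑ i : Fin n, o i)/r ≤ (A * (3 * R ^ (1-σ)))/r :=
    div_le_div_of_nonneg_right hsumo hr0.le
  calc (coverN (Metric.closedBall z R ∩ FunGraph f (Set.Icc a b)) r : ℝ)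
      ≤ ∑ i : Fin n, (m i : ℝ) := hN
    _ ≤ (n:ℝ) + (∑ i : Fin n, o i)/r := hsum2
    _ ≤ 3*R/r + (A * (3 * R ^ (1-σ)))/r := add_le_add hnle hole
    _ = 3*(R/r) + 3*A*(R^(1-σ)/r) := by ring
    _ ≤ 3*((R/r)^β) + 3*A*((R/r)^β) := by
        refine add_le_add (by linarith) ?_
        exact mul_le_mul_of_nonneg_left hkey2 (by linarith)
    _ = (3 + 3*A) * (R/r)^β := by ring
end

section
/- Let (a_m) be the sequence a_m = m^{1−s} for s > 2, set ε_m = a_m − a_{m+1}, and let f : [0, a_1] → ℝ be the piecewise linear function whose graph joins in succession the points z_m = (a_m, (−1)^m a_m), m = 1, 2, …, with f(0) = 0. Then for 1 ≤ q < ∞, the q-energy E_q(f)^q = Σ_{m=1}^∞ (a_m + a_{m+1})^q / (a_m − a_{m+1})^{q−1} is finite if and only if q < s − 1. In particular f ∈ W^{1,q}([0,a_1]) for all q < s − 1 and f ∉ W^{1,s−1}([0,a_1]). -/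
open Set Metric Filter Topology MeasureTheory
open scoped ENNReal NNReal

/-- Graph of `f` over `I`. -/
def graphOver (f : ℝ → ℝ) (I : Set ℝ) : Set (ℝ × ℝ) := (fun t => (t, f t)) '' I

/-- The sequence `a_m = m^(1-s)`. -/
noncomputable def aseq (s : ℝ) (m : ℕ) : ℝ := (m : ℝ) ^ (1 - s)

/-- The a.e. derivative of the piecewise linear function through the points
`z_m = (a_m, (-1)^m a_m)`: it has absolute value `(a_m + a_{m+1})/(a_m - a_{m+1})`
on `(a_{m+1}, a_m)`. -/
noncomputable def pwDeriv (a : ℕ → ℝ) (x : ℝ) : ℝ :=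
  ∑' m : ℕ, Set.indicator (Set.Ioo (a (m + 2)) (a (m + 1)))
    (fun _ => (a (m + 1) + a (m + 2)) / (a (m + 1) - a (m + 2))) x

section stmt13aux

section aux
variable {s : ℝ} (hs : 2 < s)

lemma apos (m : ℕ) (hm : 1 ≤ m) : 0 < aseq s m :=
  Real.rpow_pos_of_pos (by exact_mod_cast hm) _

lemma adecr (hs : 2 < s) {m n : ℕ} (hm : 1 ≤ m) (hmn : m < n) : aseq s n < aseq s m := by
  have : (1:ℝ) - s < 0 := by linarith
  exact Real.rpow_lt_rpow_of_neg (by exact_mod_cast hm) (by exact_mod_cast hmn) this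

lemma diff_bounds (hs : 2 < s) (m : ℕ) :
    (s - 1) * ((m:ℝ) + 2) ^ (-s) ≤ aseq s (m+1) - aseq s (m+2) ∧
      aseq s (m+1) - aseq s (m+2) ≤ (s - 1) * ((m:ℝ) + 1) ^ (-s) := by
  set A : ℝ := (m:ℝ) + 1 with hA
  set B : ℝ := (m:ℝ) + 2 with hB
  have hApos : 0 < A := by positivity
  have hAB : A < B := by simp only [hA, hB]; linarith
  have hcont : ContinuousOn (fun x : ℝ => x ^ (1 - s)) (Icc A B) := by
    intro x hx
    exact (Real.continuousAt_rpow_const x (1-s) (Or.inl (by nlinarith [hx.1]))).continuousWithinAt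
  have hderiv : ∀ x ∈ Ioo A B, HasDerivAt (fun x : ℝ => x ^ (1 - s))
      ((1 - s) * x ^ (1 - s - 1)) x := by
    intro x hx
    exact Real.hasDerivAt_rpow_const (Or.inl (by nlinarith [hx.1]))
  obtain ⟨c, hc, hceq⟩ := exists_hasDerivAt_eq_slope (fun x : ℝ => x ^ (1-s)) _ hAB hcont hderiv
  have hBA : B - A = 1 := by simp only [hA, hB]; ring
  have key : aseq s (m+1) - aseq s (m+2) = (s - 1) * c ^ (-s) := by
    have h1 : aseq s (m+1) = A ^ (1 - s) := by rw [aseq, hA]; push_cast; ring_nf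
    have h2 : aseq s (m+2) = B ^ (1 - s) := by rw [aseq, hB]; push_cast; ring_nf
    have : (1 - s) * c ^ (1 - s - 1) = (B ^ (1-s) - A ^ (1-s)) / (B - A) := hceq
    rw [hBA, div_one] at this
    have hexp : (1:ℝ) - s - 1 = -s := by ring
    rw [hexp] at this
    rw [h1, h2]
    nlinarith [this]
  have hcpos : 0 < c := lt_trans hApos hc.1
  have hs1 : (0:ℝ) < s - 1 := by linarith
  constructor
  · rw [key]
    have : B ^ (-s) ≤ c ^ (-s) :=
      le_of_lt (Real.rpow_lt_rpow_of_neg hcpos hc.2 (by linarith))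
    exact mul_le_mul_of_nonneg_left this hs1.le
  · rw [key]
    have : c ^ (-s) ≤ A ^ (-s) :=
      le_of_lt (Real.rpow_lt_rpow_of_neg hApos hc.1 (by linarith))
    exact mul_le_mul_of_nonneg_left this hs1.le

end aux

noncomputable def Eterm (s q : ℝ) (m : ℕ) : ℝ :=
  (aseq s (m + 1) + aseq s (m + 2)) ^ q / (aseq s (m + 1) - aseq s (m + 2)) ^ (q - 1)

section part1
variable {s q : ℝ}

lemma dpos (hs : 2 < s) (m : ℕ) : 0 < aseq s (m+1) - aseq s (m+2) :=
  sub_pos.mpr (adecr hs (Nat.le_add_left 1 m) (by omega))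

lemma Npos (hs : 2 < s) (m : ℕ) : 0 < aseq s (m+1) + aseq s (m+2) :=
  add_pos (apos _ (by omega)) (apos _ (by omega))

lemma aeq (m : ℕ) : aseq s (m+1) = ((m:ℝ)+1) ^ (1-s) := by
  rw [aseq]; push_cast; ring_nf

lemma Eterm_lb (hs : 2 < s) (hq : 1 ≤ q) (m : ℕ) :
    (s-1) ^ (1-q) * ((m:ℝ)+1) ^ (q-s) ≤ Eterm s q m := by
  set M : ℝ := (m:ℝ) + 1 with hM
  have hMpos : (0:ℝ) < M := by positivity
  have hs1 : (0:ℝ) < s - 1 := by linarith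
  have hd := dpos hs m
  have hN := Npos hs m
  have num_lb : M ^ ((1-s)*q) ≤ (aseq s (m+1) + aseq s (m+2)) ^ q := by
    rw [Real.rpow_mul hMpos.le]
    apply Real.rpow_le_rpow (Real.rpow_nonneg hMpos.le _) _ (by linarith)
    rw [← aeq]
    have := (apos (s := s) (m+2) (by omega)).le
    linarith
  have den_ub : (aseq s (m+1) - aseq s (m+2)) ^ (q-1)
      ≤ (s-1) ^ (q-1) * M ^ (-s*(q-1)) := by
    have h1 : aseq s (m+1) - aseq s (m+2) ≤ (s-1) * M ^ (-s) := (diff_bounds hs m).2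
    calc (aseq s (m+1) - aseq s (m+2)) ^ (q-1)
        ≤ ((s-1) * M ^ (-s)) ^ (q-1) := Real.rpow_le_rpow hd.le h1 (by linarith)
      _ = (s-1) ^ (q-1) * M ^ (-s*(q-1)) := by
          rw [Real.mul_rpow hs1.le (Real.rpow_nonneg hMpos.le _), ← Real.rpow_mul hMpos.le]
  have hden_pos : (0:ℝ) < (aseq s (m+1) - aseq s (m+2)) ^ (q-1) :=
    Real.rpow_pos_of_pos hd _
  have key : M ^ ((1-s)*q) / ((s-1) ^ (q-1) * M ^ (-s*(q-1))) ≤ Eterm s q m := by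
    exact div_le_div₀ (Real.rpow_nonneg hN.le _) num_lb hden_pos den_ub
  have heq : M ^ ((1-s)*q) / ((s-1) ^ (q-1) * M ^ (-s*(q-1)))
      = (s-1) ^ (1-q) * M ^ (q-s) := by
    have h1 : M ^ ((1-s)*q) = M ^ (q-s) * M ^ (-s*(q-1)) := by
      rw [← Real.rpow_add hMpos]; ring_nf
    have h2 : (s-1) ^ ((1:ℝ)-q) = ((s-1) ^ (q-1))⁻¹ := by
      rw [show (1:ℝ)-q = -(q-1) by ring, Real.rpow_neg hs1.le]
    have h3 : ((s:ℝ)-1) ^ (q-1) ≠ 0 := (Real.rpow_pos_of_pos hs1 _).ne'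
    have h4 : M ^ (-s*(q-1)) ≠ 0 := (Real.rpow_pos_of_pos hMpos _).ne'
    rw [h1, h2]
    field_simp
  linarith [key, heq.symm.le]

lemma Eterm_ub (hs : 2 < s) (hq : 1 ≤ q) (m : ℕ) :
    Eterm s q m ≤ (2:ℝ) ^ q * (2:ℝ) ^ (s*(q-1)) * (s-1) ^ (1-q) * ((m:ℝ)+1) ^ (q-s) := by
  set M : ℝ := (m:ℝ) + 1 with hM
  have hMpos : (0:ℝ) < M := by positivity
  have hM1 : (1:ℝ) ≤ M := by have := Nat.cast_nonneg (α:=ℝ) m; simp only [hM]; linarith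
  have hs1 : (0:ℝ) < s - 1 := by linarith
  have hd := dpos hs m
  have hN := Npos hs m
  have num_ub : (aseq s (m+1) + aseq s (m+2)) ^ q ≤ (2:ℝ) ^ q * M ^ ((1-s)*q) := by
    have h1 : aseq s (m+1) + aseq s (m+2) ≤ 2 * M ^ (1-s) := by
      have h2 := (adecr (s := s) hs (m := m+1) (n := m+2) (by omega) (by omega)).le
      rw [← aeq]; linarith
    calc (aseq s (m+1) + aseq s (m+2)) ^ q
        ≤ (2 * M ^ (1-s)) ^ q := Real.rpow_le_rpow hN.le h1 (by linarith)
      _ = (2:ℝ) ^ q * M ^ ((1-s)*q) := by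
          rw [Real.mul_rpow (by norm_num) (Real.rpow_nonneg hMpos.le _),
            ← Real.rpow_mul hMpos.le]
  have den_lb : (s-1) ^ (q-1) * (2:ℝ) ^ (-s*(q-1)) * M ^ (-s*(q-1))
      ≤ (aseq s (m+1) - aseq s (m+2)) ^ (q-1) := by
    have h1 : (s-1) * ((m:ℝ)+2) ^ (-s) ≤ aseq s (m+1) - aseq s (m+2) := (diff_bounds hs m).1
    have h2 : (2*M) ^ (-s) ≤ ((m:ℝ)+2) ^ (-s) := by
      apply Real.rpow_le_rpow_of_nonpos (by positivity) (by simp only [hM]; linarith)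
        (by linarith)
    have h3 : (s-1) * (2*M) ^ (-s) ≤ aseq s (m+1) - aseq s (m+2) := by
      nlinarith [mul_le_mul_of_nonneg_left h2 hs1.le]
    calc (s-1) ^ (q-1) * (2:ℝ) ^ (-s*(q-1)) * M ^ (-s*(q-1))
        = ((s-1) * (2*M) ^ (-s)) ^ (q-1) := by
          rw [Real.mul_rpow hs1.le (Real.rpow_nonneg (by positivity) _),
            ← Real.rpow_mul (by positivity : (0:ℝ) ≤ 2*M),
            Real.mul_rpow (by norm_num : (0:ℝ) ≤ 2) hMpos.le]
          ring
      _ ≤ _ := Real.rpow_le_rpow (by positivity) h3 (by linarith)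
  have hden2_pos : (0:ℝ) < (s-1) ^ (q-1) * (2:ℝ) ^ (-s*(q-1)) * M ^ (-s*(q-1)) := by
    positivity
  have key : Eterm s q m
      ≤ (2:ℝ) ^ q * M ^ ((1-s)*q) / ((s-1) ^ (q-1) * (2:ℝ) ^ (-s*(q-1)) * M ^ (-s*(q-1))) :=
    div_le_div₀ (by positivity) num_ub hden2_pos den_lb
  have heq : (2:ℝ) ^ q * M ^ ((1-s)*q) / ((s-1) ^ (q-1) * (2:ℝ) ^ (-s*(q-1)) * M ^ (-s*(q-1)))
      = (2:ℝ) ^ q * (2:ℝ) ^ (s*(q-1)) * (s-1) ^ (1-q) * M ^ (q-s) := by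
    have h1 : M ^ ((1-s)*q) = M ^ (q-s) * M ^ (-s*(q-1)) := by
      rw [← Real.rpow_add hMpos]; ring_nf
    have h2 : (s-1) ^ ((1:ℝ)-q) = ((s-1) ^ (q-1))⁻¹ := by
      rw [show (1:ℝ)-q = -(q-1) by ring, Real.rpow_neg hs1.le]
    have h2b : (2:ℝ) ^ (s*(q-1)) = ((2:ℝ) ^ (-s*(q-1)))⁻¹ := by
      rw [show s*(q-1) = -(-s*(q-1)) by ring, Real.rpow_neg (by norm_num)]
    have h3 : ((s:ℝ)-1) ^ (q-1) ≠ 0 := (Real.rpow_pos_of_pos hs1 _).ne'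
    have h4 : M ^ (-s*(q-1)) ≠ 0 := (Real.rpow_pos_of_pos hMpos _).ne'
    have h5 : (2:ℝ) ^ (-s*(q-1)) ≠ 0 := (Real.rpow_pos_of_pos (by norm_num) _).ne'
    rw [h1, h2, h2b]
    field_simp
  linarith [key, heq.le]

lemma summable_shift (r : ℝ) : Summable (fun m : ℕ => ((m:ℝ)+1) ^ r) ↔ r < -1 := by
  have : (fun m : ℕ => ((m:ℝ)+1) ^ r) = (fun m : ℕ => (((m+1:ℕ)):ℝ) ^ r) := by
    funext m; push_cast; ring_nf
  rw [this]
  exact (summable_nat_add_iff (f := fun n : ℕ => (n:ℝ) ^ r) 1).trans Real.summable_nat_rpow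

lemma part1 (hs : 2 < s) (hq : 1 ≤ q) : Summable (Eterm s q) ↔ q < s - 1 := by
  have hc : (0:ℝ) < (s-1) ^ (1-q) := Real.rpow_pos_of_pos (by linarith) _
  constructor
  · intro h
    by_contra hqs
    push_neg at hqs
    have h2 : Summable (fun m : ℕ => (s-1) ^ (1-q) * ((m:ℝ)+1) ^ (q-s)) :=
      Summable.of_nonneg_of_le (fun m => by positivity) (fun m => Eterm_lb hs hq m) h
    have h3 := (summable_mul_left_iff hc.ne').mp h2
    rw [summable_shift] at h3
    linarith
  · intro h
    apply Summable.of_nonneg_of_le (fun m => _) (fun m => Eterm_ub hs hq m)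
    · exact (Summable.mul_left _ ((summable_shift (q-s)).mpr (by linarith)))
    · intro m
      exact div_nonneg (Real.rpow_nonneg (Npos hs m).le _)
        (Real.rpow_nonneg (dpos hs m).le _)

end part1

section part2
variable {s q : ℝ}

lemma Eterm_nonneg (hs : 2 < s) (m : ℕ) : 0 ≤ Eterm s q m :=
  div_nonneg (Real.rpow_nonneg (Npos hs m).le _) (Real.rpow_nonneg (dpos hs m).le _)

lemma disjI (hs : 2 < s) :
    Pairwise (Function.onFun Disjoint
      (fun m : ℕ => Set.Ioo (aseq s (m+2)) (aseq s (m+1)))) := by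
  intro m n hmn
  wlog h : m < n generalizing m n
  · exact (this hmn.symm (by omega)).symm
  have hle : aseq s (n+1) ≤ aseq s (m+2) := by
    rcases eq_or_lt_of_le (show m+2 ≤ n+1 by omega) with he | hlt
    · rw [he]
    · exact (adecr hs (by omega) hlt).le
  rw [Function.onFun, Set.disjoint_left]
  intro x hx hx2
  have := hx.1
  have := hx2.2
  linarith

lemma pwD_eq (hs : 2 < s) (m : ℕ) {x : ℝ}
    (hx : x ∈ Set.Ioo (aseq s (m+2)) (aseq s (m+1))) :
    pwDeriv (aseq s) x
      = (aseq s (m+1) + aseq s (m+2)) / (aseq s (m+1) - aseq s (m+2)) := by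
  rw [pwDeriv, tsum_eq_single m]
  · exact Set.indicator_of_mem hx _
  · intro n hn
    apply Set.indicator_of_notMem
    intro hxn
    exact Set.disjoint_left.mp (disjI hs hn) hxn hx

lemma pwD_summable (hs : 2 < s) (x : ℝ) :
    Summable (fun m : ℕ => Set.indicator (Set.Ioo (aseq s (m+2)) (aseq s (m+1)))
      (fun _ => (aseq s (m+1) + aseq s (m+2)) / (aseq s (m+1) - aseq s (m+2))) x) := by
  by_cases hex : ∃ m : ℕ, x ∈ Set.Ioo (aseq s (m+2)) (aseq s (m+1))
  · obtain ⟨m0, hm0⟩ := hex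
    apply summable_of_ne_finset_zero (s := {m0})
    intro n hn
    simp only [Finset.mem_singleton] at hn
    apply Set.indicator_of_notMem
    intro hxn
    exact Set.disjoint_left.mp (disjI hs hn) hxn hm0
  · push_neg at hex
    apply summable_of_ne_finset_zero (s := (∅ : Finset ℕ))
    intro n _
    exact Set.indicator_of_notMem (hex n) _

lemma pwD_meas (hs : 2 < s) : Measurable (pwDeriv (aseq s)) := by
  apply measurable_of_tendsto_metrizable
    (f := fun n x => ∑ m ∈ Finset.range n,
      Set.indicator (Set.Ioo (aseq s (m+2)) (aseq s (m+1)))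
        (fun _ => (aseq s (m+1) + aseq s (m+2)) / (aseq s (m+1) - aseq s (m+2))) x)
  · intro n
    exact Finset.measurable_sum _ (fun m _ => measurable_const.indicator measurableSet_Ioo)
  · rw [tendsto_pi_nhds]
    intro x
    exact (pwD_summable hs x).hasSum.tendsto_sum_nat

lemma U_subset (hs : 2 < s) :
    (⋃ m : ℕ, Set.Ioo (aseq s (m+2)) (aseq s (m+1))) ⊆ Icc 0 (aseq s 1) := by
  intro x hx
  obtain ⟨m, hm⟩ := Set.mem_iUnion.mp hx
  constructor
  · exact le_of_lt (lt_trans (apos (s := s) (m+2) (by omega)) hm.1)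
  · rcases Nat.eq_or_lt_of_le (show 1 ≤ m+1 by omega) with he | hlt
    · exact le_of_lt (he ▸ hm.2)
    · exact le_of_lt (lt_trans hm.2 (adecr hs le_rfl hlt))

lemma compl_null (hs : 2 < s) :
    volume (Icc 0 (aseq s 1) \ ⋃ m : ℕ, Set.Ioo (aseq s (m+2)) (aseq s (m+1))) = 0 := by
  refine measure_mono_null ?_
    ((Set.Countable.insert 0 (Set.countable_range (aseq s))).measure_zero volume)
  intro x hx
  obtain ⟨hxI, hxU⟩ := hx
  by_cases hx0 : x = 0
  · exact Set.mem_insert_iff.mpr (Or.inl hx0)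
  have hxpos : 0 < x := lt_of_le_of_ne hxI.1 (Ne.symm hx0)
  have hlim : Tendsto (aseq s) atTop (𝓝 0) := by
    have h1 : Tendsto (fun x : ℝ => x ^ (-(s-1))) atTop (𝓝 0) :=
      tendsto_rpow_neg_atTop (by linarith)
    have h2 := h1.comp (tendsto_natCast_atTop_atTop (R := ℝ))
    have h3 : aseq s = (fun x : ℝ => x ^ (-(s-1))) ∘ (Nat.cast : ℕ → ℝ) := by
      funext m
      simp only [aseq, Function.comp_apply]
      norm_num
    rw [h3]
    exact h2
  have hP : ∃ n : ℕ, aseq s (n+1) < x := by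
    obtain ⟨N, hN⟩ := (hlim.eventually_lt_const hxpos).exists_forall_of_atTop
    exact ⟨N, hN (N+1) (by omega)⟩
  classical
  let k := Nat.find hP
  have hk : aseq s (k+1) < x := Nat.find_spec hP
  rcases Nat.eq_zero_or_pos k with hk0 | hkpos
  · exfalso
    rw [hk0] at hk
    exact absurd hxI.2 (not_le.mpr hk)
  · obtain ⟨j, hj⟩ := Nat.exists_eq_add_of_le hkpos
    have hjk : j < k := by omega
    have hmin : ¬ aseq s (j+1) < x := Nat.find_min hP (by omega)
    push_neg at hmin
    rcases eq_or_lt_of_le hmin with he | hlt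
    · exact Set.mem_insert_iff.mpr (Or.inr ⟨j+1, he.symm⟩)
    · exfalso
      apply hxU
      refine Set.mem_iUnion.mpr ⟨j, ?_, hlt⟩
      rw [show j + 2 = k + 1 by omega]
      exact hk

lemma lint (hs : 2 < s) (hq : 1 ≤ q) :
    ∫⁻ x in Icc 0 (aseq s 1), (‖pwDeriv (aseq s) x‖₊ : ℝ≥0∞) ^ q ∂volume
      = ∑' m : ℕ, ENNReal.ofReal (Eterm s q m) := by
  have h1 : Icc 0 (aseq s 1)
      =ᵐ[volume] ⋃ m : ℕ, Set.Ioo (aseq s (m+2)) (aseq s (m+1)) := by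
    rw [MeasureTheory.ae_eq_set]
    refine ⟨compl_null hs, ?_⟩
    rw [Set.diff_eq_empty.mpr (U_subset hs)]
    exact measure_empty
  rw [setLIntegral_congr h1,
    lintegral_iUnion (fun m => measurableSet_Ioo) (disjI hs)]
  apply tsum_congr
  intro m
  set c : ℝ := (aseq s (m+1) + aseq s (m+2)) / (aseq s (m+1) - aseq s (m+2)) with hc
  have hcpos : 0 < c := div_pos (Npos hs m) (dpos hs m)
  have heq : ∀ x ∈ Set.Ioo (aseq s (m+2)) (aseq s (m+1)),
      (‖pwDeriv (aseq s) x‖₊ : ℝ≥0∞) ^ q = ENNReal.ofReal (c ^ q) := by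
    intro x hx
    rw [pwD_eq hs m hx, ← hc, ← enorm_eq_nnnorm, Real.enorm_eq_ofReal hcpos.le,
      ← ENNReal.ofReal_rpow_of_nonneg hcpos.le (by linarith)]
  rw [setLIntegral_congr_fun measurableSet_Ioo heq,
    setLIntegral_const, Real.volume_Ioo, ← ENNReal.ofReal_mul (by positivity)]
  congr 1
  rw [hc, Eterm]
  have hd := dpos hs m
  have hN := Npos hs m
  rw [Real.div_rpow hN.le hd.le]
  have hdq : (aseq s (m+1) - aseq s (m+2)) ^ q
      = (aseq s (m+1) - aseq s (m+2)) ^ (q-1) * (aseq s (m+1) - aseq s (m+2)) := by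
    rw [show q = (q-1)+1 by ring, Real.rpow_add_one hd.ne']
    ring_nf
  rw [hdq]
  have h5 : (aseq s (m+1) - aseq s (m+2)) ^ (q-1) ≠ 0 :=
    (Real.rpow_pos_of_pos hd _).ne'
  field_simp

lemma part2 (hs : 2 < s) (hq : 1 ≤ q) :
    MemLp (pwDeriv (aseq s)) (ENNReal.ofReal q)
      (volume.restrict (Icc 0 (aseq s 1))) ↔ Summable (Eterm s q) := by
  have hq0 : (0:ℝ) < q := by linarith
  have hp0 : ENNReal.ofReal q ≠ 0 := by
    simp only [ne_eq, ENNReal.ofReal_eq_zero, not_le]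
    exact hq0
  have hpt : ENNReal.ofReal q ≠ ⊤ := ENNReal.ofReal_ne_top
  have htr : (ENNReal.ofReal q).toReal = q := ENNReal.toReal_ofReal hq0.le
  constructor
  · intro h
    have h2 := (eLpNorm_lt_top_iff_lintegral_rpow_enorm_lt_top hp0 hpt).mp h.2
    rw [htr] at h2
    rw [show (∫⁻ a, ‖pwDeriv (aseq s) a‖ₑ ^ q
        ∂(volume.restrict (Icc 0 (aseq s 1)))) =
      ∫⁻ x in Icc 0 (aseq s 1), (‖pwDeriv (aseq s) x‖₊ : ℝ≥0∞) ^ q ∂volume from rfl,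
      lint hs hq] at h2
    have h3 := ENNReal.summable_toReal h2.ne
    exact h3.congr (fun m => ENNReal.toReal_ofReal (Eterm_nonneg hs m))
  · intro h
    refine ⟨(pwD_meas hs).aestronglyMeasurable, ?_⟩
    rw [eLpNorm_lt_top_iff_lintegral_rpow_enorm_lt_top hp0 hpt, htr]
    rw [show (∫⁻ a, ‖pwDeriv (aseq s) a‖ₑ ^ q
        ∂(volume.restrict (Icc 0 (aseq s 1)))) =
      ∫⁻ x in Icc 0 (aseq s 1), (‖pwDeriv (aseq s) x‖₊ : ℝ≥0∞) ^ q ∂volume from rfl,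
      lint hs hq, ← ENNReal.ofReal_tsum_of_nonneg (fun m => Eterm_nonneg hs m) h]
    exact ENNReal.ofReal_lt_top

end part2

end stmt13aux

/-- the `q`-energy of the zigzag function with `a_m = m^(1-s)` is finite
iff `q < s - 1`; in particular `f ∈ W^{1,q}` iff `q < s - 1`. -/
theorem stmt13 (s q : ℝ) (hs : 2 < s) (hq : 1 ≤ q) :
    (Summable (fun m : ℕ =>
        (aseq s (m + 1) + aseq s (m + 2)) ^ q / (aseq s (m + 1) - aseq s (m + 2)) ^ (q - 1)) ↔
      q < s - 1) ∧
    (MeasureTheory.MemLp (pwDeriv (aseq s)) (ENNReal.ofReal q)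
        (MeasureTheory.volume.restrict (Set.Icc 0 (aseq s 1))) ↔ q < s - 1) := by
  constructor
  · exact part1 hs hq
  · exact (part2 hs hq).trans (part1 hs hq)
end

section
/- With a_m = m^{1−s}·(log m)^{−2} for m ≥ 2 and s = p + 1 > 2, the piecewise linear function f on [0, a_2] whose graph joins the points z_m = (a_m, (−1)^m a_m) in succession satisfies E_p(f)^p = Σ_{m=2}^∞ (a_m + a_{m+1})^p/(a_m − a_{m+1})^{p−1} < ∞; hence f ∈ W^{1,p}([0, a_2]). -/
open Set Metric Filter Topology MeasureTheory

/-- The sequence `a_m = m^(1-s) (log m)^{-2}`. -/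
noncomputable def aseqlog (s : ℝ) (m : ℕ) : ℝ := (m : ℝ) ^ (1 - s) * (Real.log m) ^ (-2 : ℝ)

/-- The a.e. derivative of the piecewise linear zigzag through `z_m = (a_m, (-1)^m a_m)`,
`m ≥ 2`. -/
noncomputable def pwDerivLog (a : ℕ → ℝ) (x : ℝ) : ℝ :=
  ∑' m : ℕ, Set.indicator (Set.Ioo (a (m + 3)) (a (m + 2)))
    (fun _ => (a (m + 2) + a (m + 3)) / (a (m + 2) - a (m + 3))) x


open scoped ENNReal NNReal

lemma aseqlog_pos (s : ℝ) {n : ℕ} (hn : 2 ≤ n) : 0 < aseqlog s n := by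
  have hn2 : (2:ℝ) ≤ (n:ℝ) := by exact_mod_cast hn
  have h0 : (0:ℝ) < n := by linarith
  have hl : 0 < Real.log n := Real.log_pos (by linarith)
  unfold aseqlog
  positivity

lemma aseqlog_strict (p : ℝ) (hp : 1 < p) {n : ℕ} (hn : 2 ≤ n) :
    aseqlog (p+1) (n+1) < aseqlog (p+1) n := by
  have hn2 : (2:ℝ) ≤ (n:ℝ) := by exact_mod_cast hn
  have h0 : (0:ℝ) < n := by linarith
  have hl : 0 < Real.log n := Real.log_pos (by linarith)
  have hl' : Real.log n ≤ Real.log (n+1) := Real.log_le_log h0 (by linarith)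
  have hx : ((n+1:ℕ):ℝ)^(1-(p+1)) < (n:ℝ)^(1-(p+1)) := by
    apply Real.rpow_lt_rpow_of_neg h0 (by push_cast; linarith) (by linarith)
  have hy : (Real.log ((n+1:ℕ):ℝ))^(-2:ℝ) ≤ (Real.log (n:ℝ))^(-2:ℝ) := by
    apply Real.rpow_le_rpow_of_nonpos hl (by push_cast; exact hl') (by norm_num)
  have hxpos : 0 < ((n+1:ℕ):ℝ)^(1-(p+1)) := by positivity
  have hypos : 0 < (Real.log (n:ℝ))^(-2:ℝ) := by positivity
  calc aseqlog (p+1) (n+1) = ((n+1:ℕ):ℝ)^(1-(p+1)) * (Real.log ((n+1:ℕ):ℝ))^(-2:ℝ) := rfl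
    _ ≤ ((n+1:ℕ):ℝ)^(1-(p+1)) * (Real.log (n:ℝ))^(-2:ℝ) := by
        exact mul_le_mul_of_nonneg_left hy hxpos.le
    _ < (n:ℝ)^(1-(p+1)) * (Real.log (n:ℝ))^(-2:ℝ) := by
        exact mul_lt_mul_of_pos_right hx hypos
    _ = aseqlog (p+1) n := rfl

lemma aseqlog_le (p : ℝ) (hp : 1 < p) {m n : ℕ} (hm : 2 ≤ m) (hmn : m ≤ n) :
    aseqlog (p+1) n ≤ aseqlog (p+1) m := by
  induction n, hmn using Nat.le_induction with
  | base => exact le_refl _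
  | succ n hn ih =>
      exact le_trans (aseqlog_strict p hp (le_trans hm hn)).le ih

-- core real bound
lemma core_bound (p : ℝ) (hp : 1 < p) (N : ℝ) (hN2 : 2 ≤ N) :
    (N^(-p) * (Real.log N)^(-2:ℝ) + (N+1)^(-p) * (Real.log (N+1))^(-2:ℝ)) ^ p /
      (N^(-p) * (Real.log N)^(-2:ℝ) - (N+1)^(-p) * (Real.log (N+1))^(-2:ℝ)) ^ (p-1)
      ≤ 2 * 16^(p-1) * (N^(-1:ℝ) * (Real.log N)^(-2:ℝ)) := by
  have hN : (0:ℝ) < N := by linarith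
  have hL : 0 < Real.log N := Real.log_pos (by linarith)
  set L := Real.log N with hLdef
  have hLL : L ≤ Real.log (N+1) := Real.log_le_log hN (by linarith)
  have hL1pos : 0 < Real.log (N+1) := lt_of_lt_of_le hL hLL
  have hL1 : Real.log (N+1) ≤ 2 * L := by
    have h1 : N + 1 ≤ N^2 := by nlinarith
    calc Real.log (N+1) ≤ Real.log (N^2) := Real.log_le_log (by linarith) h1
      _ = 2 * L := by
          rw [show N^2 = N*N by ring, Real.log_mul hN.ne' hN.ne']; ring
  -- a(n+1) ≤ a n factor-wise
  have hxle : (N+1)^(-p) ≤ N^(-p) :=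
    Real.rpow_le_rpow_of_nonpos hN (by linarith) (by linarith)
  have hyle : (Real.log (N+1))^(-2:ℝ) ≤ L^(-2:ℝ) :=
    Real.rpow_le_rpow_of_nonpos hL hLL (by norm_num)
  have ha1pos : 0 < (N+1)^(-p) * (Real.log (N+1))^(-2:ℝ) := by positivity
  have hanpos : 0 < N^(-p) * L^(-2:ℝ) := by positivity
  have hle : (N+1)^(-p) * (Real.log (N+1))^(-2:ℝ) ≤ N^(-p) * L^(-2:ℝ) :=
    mul_le_mul hxle hyle (by positivity) (by positivity)
  set A := N^(-p) * L^(-2:ℝ) + (N+1)^(-p) * (Real.log (N+1))^(-2:ℝ) with hAdef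
  set d := N^(-p) * L^(-2:ℝ) - (N+1)^(-p) * (Real.log (N+1))^(-2:ℝ) with hddef
  have hA : A ≤ 2 * (N^(-p) * L^(-2:ℝ)) := by rw [hAdef]; linarith
  have hApos : 0 < A := by rw [hAdef]; positivity
  -- difference lower bound
  have hkey : (1/2) * N^(-(p+1)) ≤ N^(-p) - (N+1)^(-p) := by
    have ht : (N+1)^(-p) = N^(-p) * (N/(N+1))^p := by
      rw [Real.div_rpow hN.le (by linarith : (0:ℝ) ≤ N+1), Real.rpow_neg hN.le,
        Real.rpow_neg (by linarith : (0:ℝ) ≤ N+1)]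
      have h1 : (0:ℝ) < N^p := Real.rpow_pos_of_pos hN p
      have h2 : (0:ℝ) < (N+1)^p := Real.rpow_pos_of_pos (by linarith) p
      field_simp
    have ht2 : (N/(N+1))^p ≤ N/(N+1) := by
      have h01 : N/(N+1) ≤ 1 := by rw [div_le_one (by linarith)]; linarith
      have h00 : (0:ℝ) < N/(N+1) := by positivity
      calc (N/(N+1))^p ≤ (N/(N+1))^(1:ℝ) :=
            Real.rpow_le_rpow_of_exponent_ge h00 h01 (by linarith)
        _ = N/(N+1) := Real.rpow_one _
    have hNp : (0:ℝ) < N^(-p) := by positivity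
    have h3 : N^(-p) * (1 - N/(N+1)) ≤ N^(-p) - (N+1)^(-p) := by
      rw [ht]
      have := mul_le_mul_of_nonneg_left ht2 hNp.le
      nlinarith
    have h4 : 1 - N/(N+1) = 1/(N+1) := by field_simp; ring
    have h5 : (1:ℝ)/(2*N) ≤ 1/(N+1) := by
      apply one_div_le_one_div_of_le (by linarith) (by linarith)
    have h6 : N^(-p) * (1/(2*N)) = (1/2) * N^(-(p+1)) := by
      rw [show (-(p+1)) = -p + (-1) by ring, Real.rpow_add hN, Real.rpow_neg_one]
      field_simp
    calc (1/2) * N^(-(p+1)) = N^(-p) * (1/(2*N)) := h6.symm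
      _ ≤ N^(-p) * (1/(N+1)) := by
          exact mul_le_mul_of_nonneg_left h5 hNp.le
      _ = N^(-p) * (1 - N/(N+1)) := by rw [h4]
      _ ≤ N^(-p) - (N+1)^(-p) := h3
  have hy2 : (1/4) * L^(-2:ℝ) ≤ (Real.log (N+1))^(-2:ℝ) := by
    have h1 : (2*L)^(-2:ℝ) ≤ (Real.log (N+1))^(-2:ℝ) :=
      Real.rpow_le_rpow_of_nonpos hL1pos hL1 (by norm_num)
    have h2 : (2*L)^(-2:ℝ) = (1/4) * L^(-2:ℝ) := by
      rw [Real.mul_rpow (by norm_num) hL.le,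
        show ((2:ℝ)^(-2:ℝ)) = 1/4 by
          rw [show ((-2:ℝ)) = ((-2:ℤ):ℝ) by norm_num, Real.rpow_intCast]; norm_num]
    linarith
  have hd : (1/8) * (N^(-(p+1)) * L^(-2:ℝ)) ≤ d := by
    have hdiffnn : 0 ≤ N^(-p) - (N+1)^(-p) := le_trans (by positivity) hkey
    have step : ((1/2) * N^(-(p+1))) * ((1/4) * L^(-2:ℝ))
        ≤ (N^(-p) - (N+1)^(-p)) * (Real.log (N+1))^(-2:ℝ) :=
      mul_le_mul hkey hy2 (by positivity) hdiffnn
    have step2 : (N^(-p) - (N+1)^(-p)) * (Real.log (N+1))^(-2:ℝ) ≤ d := by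
      rw [hddef]
      have := mul_le_mul_of_nonneg_left hyle (Real.rpow_pos_of_pos hN (-p)).le
      nlinarith
    nlinarith
  have hdpos : 0 < d := lt_of_lt_of_le (by positivity) hd
  -- T = A * (A/d)^(p-1)
  have hT : A^p / d^(p-1) = A * (A/d)^(p-1) := by
    have e2 : A ^ p = A * A^(p-1) := by
      nth_rewrite 1 [show p = 1 + (p-1) by ring]
      rw [Real.rpow_add hApos, Real.rpow_one]
    rw [Real.div_rpow hApos.le hdpos.le, e2, mul_div_assoc]
  -- A/d ≤ 16 N
  have hc : A / d ≤ 16 * N := by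
    have h1 : A / d ≤ (2 * (N^(-p) * L^(-2:ℝ))) / ((1/8) * (N^(-(p+1)) * L^(-2:ℝ))) :=
      div_le_div₀ (by positivity) hA (by positivity) hd
    have e1 : N * N^(-(p+1)) = N^(-p) := by
      rw [show (-(p+1)) = -p + (-1) by ring, Real.rpow_add hN, Real.rpow_neg_one]
      field_simp
    have h2 : (2 * (N^(-p) * L^(-2:ℝ))) / ((1/8) * (N^(-(p+1)) * L^(-2:ℝ))) = 16 * N := by
      rw [div_eq_iff (by positivity), ← e1]
      ring
    linarith
  have hcpow : (A/d)^(p-1) ≤ (16*N)^(p-1) :=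
    Real.rpow_le_rpow (by positivity) hc (by linarith)
  have hfin : A * (A/d)^(p-1) ≤ (2 * (N^(-p) * L^(-2:ℝ))) * ((16*N)^(p-1)) :=
    mul_le_mul hA hcpow (by positivity) (by positivity)
  have heq : (2 * (N^(-p) * L^(-2:ℝ))) * ((16*N)^(p-1))
      = 2 * 16^(p-1) * (N^(-1:ℝ) * L^(-2:ℝ)) := by
    rw [Real.mul_rpow (by norm_num) hN.le]
    have e2 : N^(-p) * N^(p-1) = N^(-1:ℝ) := by
      rw [← Real.rpow_add hN, show -p + (p-1) = (-1:ℝ) by ring]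
    rw [← e2]; ring
  calc A^p / d^(p-1) = A * (A/d)^(p-1) := hT
    _ ≤ (2 * (N^(-p) * L^(-2:ℝ))) * ((16*N)^(p-1)) := hfin
    _ = 2 * 16^(p-1) * (N^(-1:ℝ) * L^(-2:ℝ)) := heq

lemma sum_helper : Summable (fun m : ℕ => ((m:ℝ)+2)^(-1:ℝ) * (Real.log ((m:ℝ)+2))^(-2:ℝ)) := by
  have hlog2 : 0 < Real.log 2 := Real.log_pos one_lt_two
  have hpos : ∀ m : ℕ, (0:ℝ) < (m:ℝ)+2 := fun m => by positivity
  have hlogpos : ∀ m : ℕ, 0 < Real.log ((m:ℝ)+2) := fun m =>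
    Real.log_pos (by have := Nat.cast_nonneg (α := ℝ) m; linarith)
  have h_nonneg : ∀ m : ℕ, (0:ℝ) ≤ ((m:ℝ)+2)^(-1:ℝ) * (Real.log ((m:ℝ)+2))^(-2:ℝ) :=
    fun m => mul_nonneg (Real.rpow_nonneg (hpos m).le _) (Real.rpow_nonneg (hlogpos m).le _)
  have h_mono : ∀ ⦃m n : ℕ⦄, 0 < m → m ≤ n →
      ((n:ℝ)+2)^(-1:ℝ) * (Real.log ((n:ℝ)+2))^(-2:ℝ)
        ≤ ((m:ℝ)+2)^(-1:ℝ) * (Real.log ((m:ℝ)+2))^(-2:ℝ) := by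
    intro m n _ hmn
    have hc : ((m:ℝ)+2) ≤ ((n:ℝ)+2) := by
      have : (m:ℝ) ≤ (n:ℝ) := by exact_mod_cast hmn
      linarith
    exact mul_le_mul
      (Real.rpow_le_rpow_of_nonpos (hpos m) hc (by norm_num))
      (Real.rpow_le_rpow_of_nonpos (hlogpos m)
        (Real.log_le_log (hpos m) hc) (by norm_num))
      (Real.rpow_nonneg (hlogpos n).le _) (Real.rpow_nonneg (hpos m).le _)
  apply (summable_condensed_iff_of_nonneg h_nonneg h_mono).mp
  apply (summable_nat_add_iff 1).mp
  have hbase : Summable (fun k : ℕ => (Real.log 2)^(-2:ℝ) * (((k:ℝ)+1)^(-2:ℝ))) := by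
    apply Summable.mul_left
    have h0 : Summable (fun n : ℕ => (n:ℝ)^(-2:ℝ)) :=
      Real.summable_nat_rpow.mpr (by norm_num)
    exact ((summable_nat_add_iff 1).mpr h0).congr (fun n => by push_cast; ring_nf)
  apply Summable.of_nonneg_of_le _ _ hbase
  · intro k
    exact mul_nonneg (by positivity) (h_nonneg _)
  · intro k
    have hP : (0:ℝ) < 2^(k+1) := by positivity
    have hP2 : (2:ℝ) ≤ 2^(k+1) := by
      calc (2:ℝ) = 2^1 := (pow_one 2).symm
        _ ≤ 2^(k+1) := pow_le_pow_right₀ one_le_two (by omega)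
    have hcast : ((2^(k+1) : ℕ) : ℝ) = (2:ℝ)^(k+1) := by push_cast; ring
    have h1 : (2:ℝ)^(k+1) * ((2:ℝ)^(k+1)+2)^(-1:ℝ) ≤ 1 := by
      rw [Real.rpow_neg_one, ← div_eq_mul_inv]
      exact (div_le_one (by linarith)).mpr (by linarith)
    have hlogle : ((k:ℝ)+1) * Real.log 2 ≤ Real.log ((2:ℝ)^(k+1)+2) := by
      calc ((k:ℝ)+1) * Real.log 2 = Real.log ((2:ℝ)^(k+1)) := by
            rw [Real.log_pow]; push_cast; ring
        _ ≤ Real.log ((2:ℝ)^(k+1)+2) := Real.log_le_log hP (by linarith)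
    have h2 : (Real.log ((2:ℝ)^(k+1)+2))^(-2:ℝ)
        ≤ ((k:ℝ)+1)^(-2:ℝ) * (Real.log 2)^(-2:ℝ) := by
      have hb : 0 < ((k:ℝ)+1) * Real.log 2 := by positivity
      calc (Real.log ((2:ℝ)^(k+1)+2))^(-2:ℝ) ≤ (((k:ℝ)+1) * Real.log 2)^(-2:ℝ) :=
            Real.rpow_le_rpow_of_nonpos hb hlogle (by norm_num)
        _ = ((k:ℝ)+1)^(-2:ℝ) * (Real.log 2)^(-2:ℝ) := by
            rw [Real.mul_rpow (by positivity) hlog2.le]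
    calc (2:ℝ)^(k+1) * (((((2^(k+1):ℕ)):ℝ)+2)^(-1:ℝ)
          * (Real.log ((((2^(k+1):ℕ)):ℝ)+2))^(-2:ℝ))
        = ((2:ℝ)^(k+1) * ((2:ℝ)^(k+1)+2)^(-1:ℝ))
          * (Real.log ((2:ℝ)^(k+1)+2))^(-2:ℝ) := by rw [hcast, ← mul_assoc]
      _ ≤ 1 * (((k:ℝ)+1)^(-2:ℝ) * (Real.log 2)^(-2:ℝ)) :=
            mul_le_mul h1 h2 (Real.rpow_nonneg (Real.log_nonneg (by linarith)) _)
              (by norm_num)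
      _ = (Real.log 2)^(-2:ℝ) * (((k:ℝ)+1)^(-2:ℝ)) := by ring

lemma aseqlog_eq (p : ℝ) (m : ℕ) :
    aseqlog (p+1) (m+2) = ((m:ℝ)+2)^(-p) * (Real.log ((m:ℝ)+2))^(-2:ℝ) := by
  unfold aseqlog
  push_cast
  rw [show (1:ℝ)-(p+1) = -p by ring]

lemma aseqlog_eq' (p : ℝ) (m : ℕ) :
    aseqlog (p+1) (m+3) = (((m:ℝ)+2)+1)^(-p) * (Real.log (((m:ℝ)+2)+1))^(-2:ℝ) := by
  unfold aseqlog
  push_cast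
  rw [show (1:ℝ)-(p+1) = -p by ring, show (m:ℝ)+2+1 = (m:ℝ)+3 by ring]

lemma part1_s14 (p : ℝ) (hp : 1 < p) :
    Summable (fun m : ℕ =>
      (aseqlog (p + 1) (m + 2) + aseqlog (p + 1) (m + 3)) ^ p /
        (aseqlog (p + 1) (m + 2) - aseqlog (p + 1) (m + 3)) ^ (p - 1)) := by
  have key : ∀ m : ℕ,
      (aseqlog (p + 1) (m + 2) + aseqlog (p + 1) (m + 3)) ^ p /
        (aseqlog (p + 1) (m + 2) - aseqlog (p + 1) (m + 3)) ^ (p - 1)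
      ≤ 2 * 16^(p-1) * (((m:ℝ)+2)^(-1:ℝ) * (Real.log ((m:ℝ)+2))^(-2:ℝ)) := by
    intro m
    have h := core_bound p hp ((m:ℝ)+2) (by have := Nat.cast_nonneg (α := ℝ) m; linarith)
    rw [aseqlog_eq p m, aseqlog_eq' p m]
    exact h
  apply Summable.of_nonneg_of_le _ key ((sum_helper).mul_left (2 * 16^(p-1)))
  intro m
  have hApos : 0 < aseqlog (p + 1) (m + 2) + aseqlog (p + 1) (m + 3) :=
    add_pos (aseqlog_pos _ (by omega)) (aseqlog_pos _ (by omega))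
  have hdpos : 0 < aseqlog (p + 1) (m + 2) - aseqlog (p + 1) (m + 3) :=
    sub_pos.mpr (aseqlog_strict p hp (n := m+2) (by omega))
  exact div_nonneg (Real.rpow_nonneg hApos.le _) (Real.rpow_nonneg hdpos.le _)

noncomputable def cfun (p : ℝ) (m : ℕ) : ℝ :=
  (aseqlog (p+1) (m+2) + aseqlog (p+1) (m+3)) / (aseqlog (p+1) (m+2) - aseqlog (p+1) (m+3))

noncomputable def gfun (p : ℝ) (m : ℕ) : ℝ → ℝ :=
  Set.indicator (Set.Ioo (aseqlog (p+1) (m+3)) (aseqlog (p+1) (m+2))) (fun _ => cfun p m)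

lemma mem_unique (p : ℝ) (hp : 1 < p) (x : ℝ) (k l : ℕ)
    (hk : x ∈ Set.Ioo (aseqlog (p+1) (k+3)) (aseqlog (p+1) (k+2)))
    (hl : x ∈ Set.Ioo (aseqlog (p+1) (l+3)) (aseqlog (p+1) (l+2))) : k = l := by
  by_contra hne
  rcases Nat.lt_or_ge k l with h | h
  · have h1 : aseqlog (p+1) (l+2) ≤ aseqlog (p+1) (k+3) :=
      aseqlog_le p hp (by omega) (by omega)
    have := hk.1
    have := hl.2
    linarith
  · have hlk : l < k := lt_of_le_of_ne h (fun e => hne e.symm)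
    have h1 : aseqlog (p+1) (k+2) ≤ aseqlog (p+1) (l+3) :=
      aseqlog_le p hp (by omega) (by omega)
    have := hl.1
    have := hk.2
    linarith

lemma part2_s14 (p : ℝ) (hp : 1 < p) :
    MeasureTheory.MemLp (pwDerivLog (aseqlog (p + 1))) (ENNReal.ofReal p)
      (MeasureTheory.volume.restrict (Set.Icc 0 (aseqlog (p + 1) 2))) := by
  have hp0 : (0:ℝ) < p := by linarith
  have hfx : ∀ x, pwDerivLog (aseqlog (p+1)) x = ∑' m, gfun p m x := fun x => rfl
  have hdpos : ∀ m : ℕ, 0 < aseqlog (p+1) (m+2) - aseqlog (p+1) (m+3) :=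
    fun m => sub_pos.mpr (aseqlog_strict p hp (n := m+2) (by omega))
  have hApos : ∀ m : ℕ, 0 < aseqlog (p+1) (m+2) + aseqlog (p+1) (m+3) :=
    fun m => add_pos (aseqlog_pos _ (by omega)) (aseqlog_pos _ (by omega))
  have hcpos : ∀ m : ℕ, 0 < cfun p m := fun m => div_pos (hApos m) (hdpos m)
  -- values of the tsum
  have hval1 : ∀ (k : ℕ) (x : ℝ), x ∈ Set.Ioo (aseqlog (p+1) (k+3)) (aseqlog (p+1) (k+2)) →
      pwDerivLog (aseqlog (p+1)) x = cfun p k := by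
    intro k x hx
    rw [hfx]
    have hzero : ∀ m, m ≠ k → gfun p m x = 0 := fun m hm =>
      Set.indicator_of_notMem (fun h => hm (mem_unique p hp x m k h hx)) _
    exact (tsum_eq_single k hzero).trans (Set.indicator_of_mem hx _)
  have hval0 : ∀ x : ℝ, (∀ k : ℕ, x ∉ Set.Ioo (aseqlog (p+1) (k+3)) (aseqlog (p+1) (k+2))) →
      pwDerivLog (aseqlog (p+1)) x = 0 := by
    intro x hx
    rw [hfx]
    have hzero : ∀ m : ℕ, gfun p m x = 0 := fun m =>
      Set.indicator_of_notMem (hx m) _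
    exact (tsum_congr hzero).trans tsum_zero
  -- measurability
  have hgm : ∀ m, Measurable (gfun p m) :=
    fun m => Measurable.indicator measurable_const measurableSet_Ioo
  have hsum : ∀ x, Summable (fun m => gfun p m x) := by
    intro x
    by_cases hx : ∃ k, x ∈ Set.Ioo (aseqlog (p+1) (k+3)) (aseqlog (p+1) (k+2))
    · obtain ⟨k, hk⟩ := hx
      apply summable_of_ne_finset_zero (s := {k})
      intro m hm
      simp only [Finset.mem_singleton] at hm
      exact Set.indicator_of_notMem (fun h => hm (mem_unique p hp x m k h hk)) _
    · push_neg at hx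
      apply summable_of_ne_finset_zero (s := (∅ : Finset ℕ))
      intro m _
      exact Set.indicator_of_notMem (hx m) _
  have hmeas : Measurable (pwDerivLog (aseqlog (p+1))) := by
    apply measurable_of_tendsto_metrizable
      (fun n => Finset.measurable_sum (Finset.range n) (fun m _ => hgm m))
    rw [tendsto_pi_nhds]
    intro x
    exact ((hsum x).hasSum).tendsto_sum_nat
  refine ⟨hmeas.aestronglyMeasurable, ?_⟩
  rw [eLpNorm_lt_top_iff_lintegral_rpow_enorm_lt_top
      (ENNReal.ofReal_pos.mpr hp0).ne' ENNReal.ofReal_ne_top,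
    ENNReal.toReal_ofReal hp0.le]
  -- pointwise identity for the p-th power
  have hpt : ∀ x : ℝ, (↑‖pwDerivLog (aseqlog (p+1)) x‖₊ : ℝ≥0∞) ^ p
      = ∑' m, Set.indicator (Set.Ioo (aseqlog (p+1) (m+3)) (aseqlog (p+1) (m+2)))
          (fun _ => ENNReal.ofReal (cfun p m ^ p)) x := by
    intro x
    by_cases hx : ∃ k, x ∈ Set.Ioo (aseqlog (p+1) (k+3)) (aseqlog (p+1) (k+2))
    · obtain ⟨k, hk⟩ := hx
      rw [hval1 k x hk, tsum_eq_single k ?_, Set.indicator_of_mem hk]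
      · rw [← enorm_eq_nnnorm, ← ofReal_norm, Real.norm_of_nonneg (hcpos k).le,
          ENNReal.ofReal_rpow_of_pos (hcpos k)]
      · intro m hm
        exact Set.indicator_of_notMem (fun h => hm (mem_unique p hp x m k h hk)) _
    · push_neg at hx
      rw [hval0 x hx]
      rw [tsum_congr (fun m => Set.indicator_of_notMem (hx m)
        (fun _ => ENNReal.ofReal (cfun p m ^ p))), tsum_zero]
      simp [ENNReal.zero_rpow_of_pos hp0]
  calc ∫⁻ x, (↑‖pwDerivLog (aseqlog (p+1)) x‖₊ : ℝ≥0∞) ^ p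
        ∂(volume.restrict (Set.Icc 0 (aseqlog (p + 1) 2)))
      ≤ ∫⁻ x, (↑‖pwDerivLog (aseqlog (p+1)) x‖₊ : ℝ≥0∞) ^ p ∂volume :=
        lintegral_mono' Measure.restrict_le_self le_rfl
    _ = ∑' m, ENNReal.ofReal (cfun p m ^ p)
          * ENNReal.ofReal (aseqlog (p+1) (m+2) - aseqlog (p+1) (m+3)) := by
        rw [lintegral_congr hpt,
          lintegral_tsum (fun m => (measurable_const.indicator measurableSet_Ioo).aemeasurable)]
        congr 1
        funext m
        rw [lintegral_indicator measurableSet_Ioo, setLIntegral_const, Real.volume_Ioo]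
    _ = ∑' m, ENNReal.ofReal ((aseqlog (p + 1) (m + 2) + aseqlog (p + 1) (m + 3)) ^ p /
          (aseqlog (p + 1) (m + 2) - aseqlog (p + 1) (m + 3)) ^ (p - 1)) := by
        congr 1
        funext m
        rw [← ENNReal.ofReal_mul (Real.rpow_nonneg (hcpos m).le p)]
        congr 1
        unfold cfun
        rw [Real.div_rpow (hApos m).le (hdpos m).le]
        rw [Real.rpow_sub (hdpos m) p 1, Real.rpow_one]
        field_simp
    _ < ⊤ := by
        rw [← ENNReal.ofReal_tsum_of_nonneg ?_ (part1_s14 p hp)]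
        · exact ENNReal.ofReal_lt_top
        · intro m
          exact div_nonneg (Real.rpow_nonneg (hApos m).le _)
            (Real.rpow_nonneg (hdpos m).le _)

/-- with the logarithmic correction, the `p`-energy is finite,
so `f ∈ W^{1,p}`. -/
theorem stmt14 (p : ℝ) (hp : 1 < p) :
    Summable (fun m : ℕ =>
      (aseqlog (p + 1) (m + 2) + aseqlog (p + 1) (m + 3)) ^ p /
        (aseqlog (p + 1) (m + 2) - aseqlog (p + 1) (m + 3)) ^ (p - 1)) ∧
    MeasureTheory.MemLp (pwDerivLog (aseqlog (p + 1))) (ENNReal.ofReal p)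
      (MeasureTheory.volume.restrict (Set.Icc 0 (aseqlog (p + 1) 2))) := by
  exact ⟨part1_s14 p hp, part2_s14 p hp⟩
end
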